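/- arXiv:2509.23202 — 4 statements merged into one kernel-verified Lean document; each statement's English description precedes it below -/
import Mathlib

section
/- Let Z₁,…,Z_G be i.i.d. Exponential(λ) with λ > 0, and let M = max_i Z_i. For fixed δ ∈ (0,1/2), the preserved mass R_L(G) := E[Z₁² · 1{Z₁ ≥ δM}] satisfies R_L(G) = Θ((log G)² · G^{−δ}) as G → ∞. -/
open MeasureTheory ProbabilityTheory Filter

private lemma aux_sq_le_four_exp (x : ℝ) (hx : 0 ≤ x) : x ^ 2 ≤ 4 * Real.exp x := by
  have h1 : 1 + x / 2 ≤ Real.exp (x / 2) := by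
    have := Real.add_one_le_exp (x / 2); linarith
  have h2 : Real.exp x = Real.exp (x / 2) * Real.exp (x / 2) := by
    rw [← Real.exp_add]; ring_nf
  nlinarith [Real.exp_pos (x / 2)]

private lemma aux_exp_neg_le (w : ℝ) (hw : 0 < w) :
    Real.exp (-w) ≤ (Real.exp 1 * w)⁻¹ := by
  have h1 : w ≤ Real.exp (w - 1) := by have := Real.add_one_le_exp (w - 1); linarith
  have h2 : Real.exp (w - 1) * Real.exp 1 = Real.exp w := by rw [← Real.exp_add]; ring_nf
  rw [Real.exp_neg]
  have h3 : Real.exp 1 * w ≤ Real.exp w := by nlinarith [Real.exp_pos 1]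
  exact inv_anti₀ (by positivity) h3

private lemma aux_one_sub_pow_le (x : ℝ) (hx0 : 0 ≤ x) (hx1 : x ≤ 1) (m : ℕ) :
    (1 - x) ^ m ≤ Real.exp (-((m : ℝ) * x)) := by
  have h1 : 1 - x ≤ Real.exp (-x) := by have := Real.add_one_le_exp (-x); linarith
  calc (1 - x) ^ m ≤ Real.exp (-x) ^ m := by
        apply pow_le_pow_left₀ (by linarith) h1
    _ = Real.exp (-((m : ℝ) * x)) := by rw [← Real.exp_nat_mul]; ring_nf

private lemma aux_tail_term (l : ℝ) (hl : 0 < l) (K j : ℕ) :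
    ((j : ℝ) + (K : ℝ) + 1) ^ 2 * Real.exp (-l * ((j : ℝ) + (K : ℝ))) ≤
      (2 * (1 + 16 / l ^ 2) * ((K : ℝ) + 1) ^ 2 * Real.exp (-l * K)) * Real.exp (-(l / 2)) ^ j := by
  have hj : (0:ℝ) ≤ j := Nat.cast_nonneg j
  have hK : (0:ℝ) ≤ K := Nat.cast_nonneg K
  have hjsq : (j : ℝ) ^ 2 ≤ 16 / l ^ 2 * Real.exp (l * j / 2) := by
    have h := aux_sq_le_four_exp (l * j / 2) (by positivity)
    have hl2 : (0:ℝ) < l ^ 2 := by positivity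
    rw [div_pow] at h
    calc (j:ℝ)^2 = (l * j / 2)^2 * (4 / l^2) := by field_simp; ring
      _ ≤ 4 * Real.exp (l * j / 2) * (4 / l ^ 2) := by
          apply mul_le_mul_of_nonneg_right _ (by positivity)
          calc (l * j / 2)^2 = (l*j)^2/2^2 := by rw [div_pow]
            _ ≤ 4 * Real.exp (l * j / 2) := by
              have : ((l*j)/2)^2 = (l*j)^2/2^2 := by rw [div_pow]
              rw [← this]; exact aux_sq_le_four_exp _ (by positivity)
      _ = 16 / l ^ 2 * Real.exp (l * j / 2) := by ring
  have hsum : ((j : ℝ) + (K : ℝ) + 1) ^ 2 ≤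
      2 * (1 + 16 / l ^ 2) * ((K : ℝ) + 1) ^ 2 * Real.exp (l * j / 2) := by
    have hexp1 : (1:ℝ) ≤ Real.exp (l * j / 2) := by
      rw [← Real.exp_zero]; exact Real.exp_le_exp.mpr (by positivity)
    have hK1 : (1:ℝ) ≤ ((K:ℝ)+1)^2 := by nlinarith
    nlinarith [sq_nonneg ((j:ℝ) - (K:ℝ) - 1), Real.exp_pos (l * j / 2), sq_nonneg (j:ℝ)]
  have hexpsplit : Real.exp (-l * ((j : ℝ) + (K : ℝ))) =
      Real.exp (-l * K) * Real.exp (-(l/2)) ^ j * Real.exp (-(l * j / 2)) := by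
    rw [← Real.exp_nat_mul, ← Real.exp_add, ← Real.exp_add]; ring_nf
  rw [hexpsplit]
  have h2 := mul_le_mul_of_nonneg_right hsum (le_of_lt (Real.exp_pos (-(l * j / 2))))
  calc ((j : ℝ) + (K : ℝ) + 1) ^ 2 * (Real.exp (-l * K) * Real.exp (-(l/2)) ^ j * Real.exp (-(l * j / 2)))
      ≤ (2 * (1 + 16 / l ^ 2) * ((K : ℝ) + 1) ^ 2 * Real.exp (l * j / 2)) * Real.exp (-(l * j / 2)) * (Real.exp (-l * K) * Real.exp (-(l/2)) ^ j) := by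
        have hpos : (0:ℝ) < Real.exp (-l * K) * Real.exp (-(l/2)) ^ j := by positivity
        nlinarith [mul_le_mul_of_nonneg_right (mul_le_mul_of_nonneg_right hsum (le_of_lt (Real.exp_pos (-(l * j / 2))))) hpos.le]
    _ = (2 * (1 + 16 / l ^ 2) * ((K : ℝ) + 1) ^ 2 * Real.exp (-l * K)) * Real.exp (-(l / 2)) ^ j := by
        have hone : Real.exp (l * j / 2) * Real.exp (-(l * j / 2)) = 1 := by
          rw [← Real.exp_add]; norm_num
        linear_combination (2 * (1 + 16 / l ^ 2) * ((K : ℝ) + 1) ^ 2 * (Real.exp (-l * (K:ℝ)) * Real.exp (-(l/2)) ^ j)) * hone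
set_option maxHeartbeats 1000000 in

private lemma aux_grand (l δ : ℝ) (hl : 0 < l) (hδ0 : 0 < δ) (hδ1 : δ < 1) :
    ∃ C : ℝ, 0 < C ∧ ∀ G : ℕ, 4 ≤ G →
      ((∑ k ∈ Finset.range (⌈δ * Real.log G / l⌉₊), ((k : ℝ) + 1) ^ 2 * Real.exp (-l * k) *
            Real.exp (-((G : ℝ) - 1) * Real.exp (-l * (((k : ℝ) + 1) / δ))))
        + (2 * (1 + 16 / l ^ 2) * ((⌈δ * Real.log G / l⌉₊ : ℝ) + 1) ^ 2 *
            Real.exp (-l * (⌈δ * Real.log G / l⌉₊ : ℝ))) * (1 - Real.exp (-(l / 2)))⁻¹)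
      ≤ C * ((Real.log G) ^ 2 * (G : ℝ) ^ (-δ)) := by
  have hρ : 1 < Real.exp (l / δ - l) := by
    rw [← Real.exp_zero, Real.exp_lt_exp]
    have : l < l / δ := by rw [lt_div_iff₀ hδ0]; nlinarith
    linarith
  have hr : Real.exp (-(l / 2)) < 1 := by rw [Real.exp_lt_one_iff]; linarith
  have hrpos : 0 < 1 - Real.exp (-(l / 2)) := by linarith
  set ρ := Real.exp (l / δ - l) with hρdef
  have hρ1 : 0 < ρ - 1 := by linarith
  set C₁ : ℝ := (δ/l+2)^2 * (2 * Real.exp (2*l/δ - 1) * (ρ-1)⁻¹) with hC₁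
  set C₂ : ℝ := 2*(1+16/l^2)*(1 - Real.exp (-(l/2)))⁻¹*(δ/l+2)^2 with hC₂
  have hC₁pos : 0 < C₁ := by
    apply mul_pos (by positivity)
    apply mul_pos (by positivity) (inv_pos.mpr hρ1)
  have hC₂pos : 0 < C₂ := by
    apply mul_pos (mul_pos (by positivity) (inv_pos.mpr hrpos)) (by positivity)
  refine ⟨C₁ + C₂, by linarith, ?_⟩
  intro G hG
  set K := ⌈δ * Real.log G / l⌉₊ with hKdef
  have hG4 : (4:ℝ) ≤ (G:ℝ) := by exact_mod_cast hG
  have hG0 : (0:ℝ) < G := by linarith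
  have hlog1 : 1 ≤ Real.log G := by
    rw [Real.le_log_iff_exp_le hG0]
    calc Real.exp 1 ≤ 2.7182818286 := Real.exp_one_lt_d9.le
      _ ≤ (G:ℝ) := by linarith
  have hlogpos : 0 < Real.log G := by linarith
  have hKlb : δ * Real.log G / l ≤ (K:ℝ) := Nat.le_ceil _
  have hKub : (K:ℝ) < δ * Real.log G / l + 1 := Nat.ceil_lt_add_one (by positivity)
  have hGpow : (G:ℝ) ^ (-δ) = Real.exp (-(δ * Real.log G)) := by
    rw [Real.rpow_def_of_pos hG0]; ring_nf
  have hGpowpos : 0 < (G:ℝ) ^ (-δ) := by rw [hGpow]; exact Real.exp_pos _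
  have hexpK : Real.exp (-l * K) ≤ (G:ℝ) ^ (-δ) := by
    rw [hGpow]
    apply Real.exp_le_exp.mpr
    have h1 : δ * Real.log G ≤ l * K := by
      rw [div_le_iff₀ hl] at hKlb; linarith
    linarith
  have hK1 : (K:ℝ) + 1 ≤ (δ/l+2) * Real.log G := by
    have h1 : δ * Real.log G / l = (δ/l) * Real.log G := by ring
    rw [h1] at hKub
    nlinarith
  have hK1sq : ((K:ℝ)+1)^2 ≤ ((δ/l+2) * Real.log G)^2 := by
    apply pow_le_pow_left₀ (by positivity) hK1
  -- head bound
  have hGm1 : (0:ℝ) < (G:ℝ) - 1 := by linarith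
  have hterm : ∀ k ∈ Finset.range K, ((k : ℝ) + 1) ^ 2 * Real.exp (-l * k) *
      Real.exp (-((G : ℝ) - 1) * Real.exp (-l * (((k : ℝ) + 1) / δ)))
      ≤ ((K:ℝ)+1)^2 * (Real.exp (l/δ - 1) * ((G:ℝ)-1)⁻¹) * ρ ^ k := by
    intro k hk
    have hk1 : (k:ℝ) + 1 ≤ (K:ℝ) + 1 := by
      have h := Finset.mem_range.mp hk
      have : (k:ℝ) < K := by exact_mod_cast h
      linarith
    have hw : 0 < ((G:ℝ)-1) * Real.exp (-l * (((k : ℝ) + 1) / δ)) :=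
      mul_pos hGm1 (Real.exp_pos _)
    have he2 := aux_exp_neg_le _ hw
    have hinvw : (Real.exp (-l * (((k:ℝ)+1)/δ)))⁻¹ = Real.exp (l * (((k:ℝ)+1)/δ)) := by
      rw [← Real.exp_neg]; ring_nf
    have he3 : Real.exp (-(((G:ℝ)-1) * Real.exp (-l * (((k : ℝ) + 1) / δ))))
        ≤ Real.exp (-(1:ℝ)) * (((G:ℝ)-1)⁻¹ * Real.exp (l * (((k:ℝ)+1)/δ))) := by
      calc Real.exp (-(((G:ℝ)-1) * Real.exp (-l * (((k : ℝ) + 1) / δ))))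
          ≤ (Real.exp 1 * (((G:ℝ)-1) * Real.exp (-l * (((k : ℝ) + 1) / δ))))⁻¹ := he2
        _ = Real.exp (-(1:ℝ)) * (((G:ℝ)-1)⁻¹ * Real.exp (l * (((k:ℝ)+1)/δ))) := by
            rw [mul_inv, mul_inv, ← Real.exp_neg, hinvw]
    have hx : Real.exp (-l * k) * (Real.exp (-(1:ℝ)) * Real.exp (l * (((k:ℝ)+1)/δ)))
        = Real.exp (l/δ - 1) * ρ ^ k := by
      rw [hρdef, ← Real.exp_nat_mul, ← Real.exp_add, ← Real.exp_add, ← Real.exp_add]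
      congr 1
      field_simp
      ring
    have hEneg : -((G : ℝ) - 1) * Real.exp (-l * (((k : ℝ) + 1) / δ))
        = -(((G:ℝ)-1) * Real.exp (-l * (((k : ℝ) + 1) / δ))) := by ring
    calc ((k : ℝ) + 1) ^ 2 * Real.exp (-l * k) *
          Real.exp (-((G : ℝ) - 1) * Real.exp (-l * (((k : ℝ) + 1) / δ)))
        ≤ ((k : ℝ) + 1) ^ 2 * Real.exp (-l * k) *
          (Real.exp (-(1:ℝ)) * (((G:ℝ)-1)⁻¹ * Real.exp (l * (((k:ℝ)+1)/δ)))) := by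
          rw [hEneg]
          exact mul_le_mul_of_nonneg_left he3 (by positivity)
      _ = ((k : ℝ) + 1) ^ 2 * (Real.exp (l/δ - 1) * ((G:ℝ)-1)⁻¹) * ρ ^ k := by
          linear_combination ((k:ℝ)+1)^2 * ((G:ℝ)-1)⁻¹ * hx
      _ ≤ ((K:ℝ)+1)^2 * (Real.exp (l/δ - 1) * ((G:ℝ)-1)⁻¹) * ρ ^ k := by
          apply mul_le_mul_of_nonneg_right _ (by positivity)
          apply mul_le_mul_of_nonneg_right _ (by positivity)
          apply pow_le_pow_left₀ (by positivity) hk1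
  have hgeom : ∑ k ∈ Finset.range K, ρ ^ k ≤ ρ ^ K * (ρ - 1)⁻¹ := by
    rw [geom_sum_eq (by linarith : ρ ≠ 1)]
    rw [div_eq_mul_inv]
    apply mul_le_mul_of_nonneg_right (by linarith) (inv_pos.mpr hρ1).le
  have hρK : ρ ^ K ≤ Real.exp (l/δ) * (G:ℝ) * (G:ℝ) ^ (-δ) := by
    have h1 : ρ ^ K = Real.exp ((K:ℝ) * (l/δ)) * Real.exp (-l * K) := by
      rw [hρdef, ← Real.exp_nat_mul, ← Real.exp_add]
      congr 1; ring
    rw [h1]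
    have h2 : Real.exp ((K:ℝ) * (l/δ)) ≤ Real.exp (l/δ) * (G:ℝ) := by
      have h3 : (K:ℝ) * (l/δ) ≤ Real.log G + l/δ := by
        have h4 : (K:ℝ) ≤ δ * Real.log G / l + 1 := hKub.le
        have h5 : 0 < l/δ := by positivity
        have h6 : (δ * Real.log G / l + 1) * (l/δ) = Real.log G + l/δ := by
          field_simp
        nlinarith
      calc Real.exp ((K:ℝ) * (l/δ)) ≤ Real.exp (Real.log G + l/δ) := Real.exp_le_exp.mpr h3
        _ = Real.exp (l/δ) * (G:ℝ) := by rw [Real.exp_add, Real.exp_log hG0]; ring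
    exact mul_le_mul h2 hexpK (Real.exp_pos _).le (by positivity)
  have hhead : (∑ k ∈ Finset.range K, ((k : ℝ) + 1) ^ 2 * Real.exp (-l * k) *
      Real.exp (-((G : ℝ) - 1) * Real.exp (-l * (((k : ℝ) + 1) / δ))))
      ≤ C₁ * ((Real.log G) ^ 2 * (G : ℝ) ^ (-δ)) := by
    have h1 := Finset.sum_le_sum hterm
    rw [← Finset.mul_sum] at h1
    have h2 : ((K:ℝ)+1)^2 * (Real.exp (l/δ - 1) * ((G:ℝ)-1)⁻¹) * ∑ k ∈ Finset.range K, ρ ^ k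
        ≤ ((K:ℝ)+1)^2 * (Real.exp (l/δ - 1) * ((G:ℝ)-1)⁻¹) * (ρ ^ K * (ρ - 1)⁻¹) :=
      mul_le_mul_of_nonneg_left hgeom (by positivity)
    have h3 : ((K:ℝ)+1)^2 * (Real.exp (l/δ - 1) * ((G:ℝ)-1)⁻¹) * (ρ ^ K * (ρ - 1)⁻¹)
        ≤ ((K:ℝ)+1)^2 * (Real.exp (l/δ - 1) * ((G:ℝ)-1)⁻¹) *
          ((Real.exp (l/δ) * (G:ℝ) * (G:ℝ) ^ (-δ)) * (ρ - 1)⁻¹) := by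
      apply mul_le_mul_of_nonneg_left _ (by positivity)
      exact mul_le_mul_of_nonneg_right hρK (inv_pos.mpr hρ1).le
    have hG2 : ((G:ℝ)-1)⁻¹ * (G:ℝ) ≤ 2 := by
      rw [inv_mul_le_iff₀ hGm1]; linarith
    have h4 : ((K:ℝ)+1)^2 * (Real.exp (l/δ - 1) * ((G:ℝ)-1)⁻¹) *
          ((Real.exp (l/δ) * (G:ℝ) * (G:ℝ) ^ (-δ)) * (ρ - 1)⁻¹)
        ≤ ((δ/l+2) * Real.log G)^2 * (2 * Real.exp (2*l/δ - 1) * (ρ-1)⁻¹) * (G:ℝ)^(-δ) := by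
      have hee : Real.exp (l/δ - 1) * Real.exp (l/δ) = Real.exp (2*l/δ - 1) := by
        rw [← Real.exp_add]; congr 1; ring
      calc ((K:ℝ)+1)^2 * (Real.exp (l/δ - 1) * ((G:ℝ)-1)⁻¹) *
            ((Real.exp (l/δ) * (G:ℝ) * (G:ℝ) ^ (-δ)) * (ρ - 1)⁻¹)
          = ((K:ℝ)+1)^2 * (Real.exp (2*l/δ - 1) * (ρ-1)⁻¹ * (G:ℝ)^(-δ)) *
            (((G:ℝ)-1)⁻¹ * (G:ℝ)) := by rw [← hee]; ring
        _ ≤ ((K:ℝ)+1)^2 * (Real.exp (2*l/δ - 1) * (ρ-1)⁻¹ * (G:ℝ)^(-δ)) * 2 := by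
            apply mul_le_mul_of_nonneg_left hG2 (by positivity)
        _ ≤ ((δ/l+2) * Real.log G)^2 * (Real.exp (2*l/δ - 1) * (ρ-1)⁻¹ * (G:ℝ)^(-δ)) * 2 := by
            apply mul_le_mul_of_nonneg_right _ (by norm_num)
            exact mul_le_mul_of_nonneg_right hK1sq (by positivity)
        _ = ((δ/l+2) * Real.log G)^2 * (2 * Real.exp (2*l/δ - 1) * (ρ-1)⁻¹) * (G:ℝ)^(-δ) := by
            ring
    have h5 : ((δ/l+2) * Real.log G)^2 * (2 * Real.exp (2*l/δ - 1) * (ρ-1)⁻¹) * (G:ℝ)^(-δ)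
        = C₁ * ((Real.log G) ^ 2 * (G : ℝ) ^ (-δ)) := by rw [hC₁]; ring
    linarith
  have htail : (2 * (1 + 16 / l ^ 2) * ((K : ℝ) + 1) ^ 2 *
        Real.exp (-l * (K : ℝ))) * (1 - Real.exp (-(l / 2)))⁻¹
      ≤ C₂ * ((Real.log G) ^ 2 * (G : ℝ) ^ (-δ)) := by
    have h1 : (2 * (1 + 16 / l ^ 2) * ((K : ℝ) + 1) ^ 2 * Real.exp (-l * (K : ℝ))) *
          (1 - Real.exp (-(l / 2)))⁻¹
        ≤ (2 * (1 + 16 / l ^ 2) * (((δ/l+2) * Real.log G)^2) * ((G:ℝ)^(-δ))) *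
          (1 - Real.exp (-(l / 2)))⁻¹ := by
      apply mul_le_mul_of_nonneg_right _ (inv_pos.mpr hrpos).le
      apply mul_le_mul _ hexpK (Real.exp_pos _).le (by positivity)
      exact mul_le_mul_of_nonneg_left hK1sq (by positivity)
    have h2 : (2 * (1 + 16 / l ^ 2) * (((δ/l+2) * Real.log G)^2) * ((G:ℝ)^(-δ))) *
          (1 - Real.exp (-(l / 2)))⁻¹ = C₂ * ((Real.log G) ^ 2 * (G : ℝ) ^ (-δ)) := by
      rw [hC₂]; ring
    linarith
  have hfinal : (C₁ + C₂) * ((Real.log G) ^ 2 * (G : ℝ) ^ (-δ))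
      = C₁ * ((Real.log G) ^ 2 * (G : ℝ) ^ (-δ)) + C₂ * ((Real.log G) ^ 2 * (G : ℝ) ^ (-δ)) := by
    ring
  linarith
open MeasureTheory ProbabilityTheory Filter

set_option maxHeartbeats 2000000 in
/-- Laplace-model preserved mass: for i.i.d. Exponential(λ) magnitudes,
`E[Z₁² · 1{Z₁ ≥ δ M}] = Θ((log G)² G^{-δ})` as `G → ∞`. -/
theorem stmt_3 {Ω : Type*} [MeasurableSpace Ω] (μ : Measure Ω) [IsProbabilityMeasure μ]
    (Z : ℕ → Ω → ℝ) (l δ : ℝ) (hl : 0 < l) (hδ : δ ∈ Set.Ioo (0 : ℝ) (1 / 2))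
    (hmeas : ∀ i, Measurable (Z i))
    (hindep : iIndepFun Z μ)
    (hcdf : ∀ i, ∀ z : ℝ, 0 ≤ z →
      μ {ω | Z i ω ≤ z} = ENNReal.ofReal (1 - Real.exp (-l * z))) :
    ∃ c C : ℝ, 0 < c ∧ 0 < C ∧ ∃ G₀ : ℕ, ∀ G : ℕ, ∀ hG : G₀ + 1 ≤ G,
      c * ((Real.log G) ^ 2 * (G : ℝ) ^ (-δ)) ≤
        (∫ ω in {ω | δ * (Finset.range G).sup'
            (Finset.nonempty_range_iff.mpr (by omega)) (fun i => Z i ω) ≤ Z 0 ω},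
          (Z 0 ω) ^ 2 ∂μ) ∧
      (∫ ω in {ω | δ * (Finset.range G).sup'
            (Finset.nonempty_range_iff.mpr (by omega)) (fun i => Z i ω) ≤ Z 0 ω},
          (Z 0 ω) ^ 2 ∂μ) ≤
        C * ((Real.log G) ^ 2 * (G : ℝ) ^ (-δ)) := by

  obtain ⟨hδ0, hδh⟩ := hδ
  have hδ1 : δ < 1 := by norm_num at hδh; linarith
  obtain ⟨C, hCpos, hC⟩ := aux_grand l δ hl hδ0 hδ1
  refine ⟨δ^2 / l^2 * Real.exp (-1) / 2, C, by positivity, hCpos, 3, ?_⟩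
  intro G hG
  have hG4 : 4 ≤ G := hG
  have hne : (Finset.range G).Nonempty := Finset.nonempty_range_iff.mpr (by omega)
  set E : Set Ω := {ω | δ * (Finset.range G).sup' hne (fun i => Z i ω) ≤ Z 0 ω} with hEdef
  -- basic real facts
  have hG4R : (4:ℝ) ≤ (G:ℝ) := by exact_mod_cast hG4
  have hG0R : (0:ℝ) < G := by linarith
  have hlog1 : 1 ≤ Real.log G := by
    rw [Real.le_log_iff_exp_le hG0R]
    calc Real.exp 1 ≤ 2.7182818286 := Real.exp_one_lt_d9.le
      _ ≤ (G:ℝ) := by linarith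
  have hlogpos : 0 < Real.log G := by linarith
  have hGpow : (G:ℝ) ^ (-δ) = Real.exp (-(δ * Real.log G)) := by
    rw [Real.rpow_def_of_pos hG0R]; ring_nf
  have hGpowpos : 0 < (G:ℝ) ^ (-δ) := by rw [hGpow]; exact Real.exp_pos _
  -- CDF facts
  have hIic : ∀ i, ∀ b : ℝ, 0 ≤ b →
      μ (Z i ⁻¹' Set.Iic b) = ENNReal.ofReal (1 - Real.exp (-l * b)) :=
    fun i b hb => hcdf i b hb
  have hsub1 : ∀ x : ℝ, 0 ≤ x → 0 ≤ 1 - Real.exp (-l * x) := by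
    intro x hx
    have : Real.exp (-l * x) ≤ 1 := by
      rw [Real.exp_le_one_iff]
      nlinarith
    linarith
  have hIoi : ∀ a : ℝ, 0 ≤ a →
      μ (Z 0 ⁻¹' Set.Ioi a) = ENNReal.ofReal (Real.exp (-l * a)) := by
    intro a ha
    have hc : Z 0 ⁻¹' Set.Ioi a = (Z 0 ⁻¹' Set.Iic a)ᶜ := by
      rw [← Set.preimage_compl, Set.compl_Iic]
    rw [hc, measure_compl ((hmeas 0) measurableSet_Iic) (measure_ne_top μ _),
      hIic 0 a ha, measure_univ, ← ENNReal.ofReal_one,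
      ← ENNReal.ofReal_sub _ (hsub1 a ha)]
    congr 1; ring
  have hIoc : ∀ a b : ℝ, 0 ≤ a → a ≤ b →
      μ (Z 0 ⁻¹' Set.Ioc a b) = ENNReal.ofReal (Real.exp (-l * a) - Real.exp (-l * b)) := by
    intro a b ha hab
    have hc : Z 0 ⁻¹' Set.Ioc a b = Z 0 ⁻¹' Set.Iic b \ Z 0 ⁻¹' Set.Iic a := by
      rw [← Set.preimage_diff, Set.Iic_sdiff_Iic]
    rw [hc, measure_diff (Set.preimage_mono (Set.Iic_subset_Iic.mpr hab))
      (((hmeas 0) measurableSet_Iic).nullMeasurableSet) (measure_ne_top μ _),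
      hIic 0 a ha, hIic 0 b (le_trans ha hab),
      ← ENNReal.ofReal_sub _ (hsub1 a ha)]
    congr 1; ring
  -- independence product for events of our shape
  have hEvent : ∀ (S0 : Set ℝ) (b : ℝ), MeasurableSet S0 → 0 ≤ b →
      μ (⋂ i ∈ Finset.range G, Z i ⁻¹' (if i = 0 then S0 else Set.Iic b))
        = μ (Z 0 ⁻¹' S0) * ENNReal.ofReal (1 - Real.exp (-l * b)) ^ (G - 1) := by
    intro S0 b hS0 hb
    have h0mem : (0:ℕ) ∈ Finset.range G := Finset.mem_range.mpr (by omega)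
    rw [hindep.measure_inter_preimage_eq_mul (Finset.range G)
      (sets := fun i => if i = 0 then S0 else Set.Iic b)
      (fun i _ => by by_cases h : i = 0 <;> simp [h, hS0, measurableSet_Iic]),
      ← Finset.mul_prod_erase _ _ h0mem]
    simp only [if_pos rfl]
    congr 1
    calc ∏ i ∈ (Finset.range G).erase 0, μ (Z i ⁻¹' (if i = 0 then S0 else Set.Iic b))
        = ∏ _i ∈ (Finset.range G).erase 0, ENNReal.ofReal (1 - Real.exp (-l * b)) :=
          Finset.prod_congr rfl (fun i hi => by
            rw [if_neg (Finset.ne_of_mem_erase hi)]; exact hIic i b hb)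
      _ = ENNReal.ofReal (1 - Real.exp (-l * b)) ^ (G - 1) := by
          rw [Finset.prod_const, Finset.card_erase_of_mem h0mem, Finset.card_range]
  -- measurability of E
  have hsup : Measurable (fun ω => (Finset.range G).sup' hne (fun i => Z i ω)) := by
    have h := Finset.measurable_sup' hne (fun i (_ : i ∈ Finset.range G) => hmeas i)
    have heq : (Finset.range G).sup' hne Z = fun ω => (Finset.range G).sup' hne (fun i => Z i ω) := by
      funext ω; exact Finset.sup'_apply hne Z ω
    rwa [heq] at h
  have hEmeas : MeasurableSet E :=
    measurableSet_le (measurable_const.mul hsup) (hmeas 0)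
  -- the lintegral
  set L : ENNReal := ∫⁻ ω in E, ENNReal.ofReal ((Z 0 ω) ^ 2) ∂μ with hLdef
  have hint : ∫ ω in E, (Z 0 ω) ^ 2 ∂μ = L.toReal := by
    rw [hLdef]
    exact integral_eq_lintegral_of_nonneg_ae (Filter.Eventually.of_forall fun ω => sq_nonneg _)
      ((hmeas 0).pow_const 2).aestronglyMeasurable
  ----------------------------------------------------------------
  -- UPPER BOUND
  ----------------------------------------------------------------
  have hμneg : μ {ω | Z 0 ω ≤ 0} = 0 := by
    have h := hcdf 0 0 le_rfl
    simpa using h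
  set g : ℕ → ℝ := fun k => ((k : ℝ) + 1) ^ 2 * Real.exp (-l * k) *
      Real.exp (-((G : ℝ) - 1) * Real.exp (-l * (((k : ℝ) + 1) / δ))) with hgdef
  have hgnn : ∀ k, 0 ≤ g k := fun k => by positivity
  have hGm1cast : ((G - 1 : ℕ) : ℝ) = (G : ℝ) - 1 := by
    rw [Nat.cast_sub (by omega : 1 ≤ G), Nat.cast_one]
  -- slice bound
  have hsl : ∀ k : ℕ, ∫⁻ ω in E ∩ Z 0 ⁻¹' Set.Ioc (k : ℝ) ((k : ℝ) + 1),
      ENNReal.ofReal ((Z 0 ω) ^ 2) ∂μ ≤ ENNReal.ofReal (g k) := by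
    intro k
    have hknn : (0:ℝ) ≤ k := Nat.cast_nonneg k
    have hstep1 : ∫⁻ ω in E ∩ Z 0 ⁻¹' Set.Ioc (k : ℝ) ((k : ℝ) + 1),
        ENNReal.ofReal ((Z 0 ω) ^ 2) ∂μ ≤
        ENNReal.ofReal (((k:ℝ) + 1) ^ 2) * μ (E ∩ Z 0 ⁻¹' Set.Ioc (k : ℝ) ((k : ℝ) + 1)) := by
      rw [← setLIntegral_const]
      apply setLIntegral_mono measurable_const
      intro ω hω
      obtain ⟨-, hω2⟩ := hω
      obtain ⟨h1, h2⟩ := hω2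
      apply ENNReal.ofReal_le_ofReal
      nlinarith
    have hsubset : E ∩ Z 0 ⁻¹' Set.Ioc (k : ℝ) ((k : ℝ) + 1) ⊆
        ⋂ i ∈ Finset.range G, Z i ⁻¹' (if i = 0 then Set.Ioi (k:ℝ) else Set.Iic (((k:ℝ)+1)/δ)) := by
      rintro ω ⟨hωE, hωs⟩
      apply Set.mem_iInter₂.mpr
      intro i hi
      by_cases h : i = 0
      · subst h; simp only [if_pos rfl]
        exact hωs.1
      · simp only [if_neg h]
        have hsup_le : (Finset.range G).sup' hne (fun j => Z j ω) ≤ ((k:ℝ)+1)/δ := by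
          rw [le_div_iff₀ hδ0]
          have hE' : δ * (Finset.range G).sup' hne (fun j => Z j ω) ≤ Z 0 ω := hωE
          have : Z 0 ω ≤ (k:ℝ) + 1 := hωs.2
          nlinarith [hE']
        exact le_trans (Finset.le_sup' (fun j => Z j ω) hi) hsup_le
    have hstep2 : μ (E ∩ Z 0 ⁻¹' Set.Ioc (k : ℝ) ((k : ℝ) + 1)) ≤
        ENNReal.ofReal (Real.exp (-l * k)) *
          ENNReal.ofReal (1 - Real.exp (-l * (((k:ℝ)+1)/δ))) ^ (G - 1) := by
      calc μ (E ∩ Z 0 ⁻¹' Set.Ioc (k : ℝ) ((k : ℝ) + 1))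
          ≤ μ (⋂ i ∈ Finset.range G, Z i ⁻¹'
              (if i = 0 then Set.Ioi (k:ℝ) else Set.Iic (((k:ℝ)+1)/δ))) := measure_mono hsubset
        _ = μ (Z 0 ⁻¹' Set.Ioi (k:ℝ)) *
              ENNReal.ofReal (1 - Real.exp (-l * (((k:ℝ)+1)/δ))) ^ (G - 1) :=
            hEvent _ _ measurableSet_Ioi (by positivity)
        _ = ENNReal.ofReal (Real.exp (-l * k)) *
              ENNReal.ofReal (1 - Real.exp (-l * (((k:ℝ)+1)/δ))) ^ (G - 1) := by
            rw [hIoi _ hknn]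
    have hstep3 : ENNReal.ofReal (((k:ℝ) + 1) ^ 2) * (ENNReal.ofReal (Real.exp (-l * k)) *
        ENNReal.ofReal (1 - Real.exp (-l * (((k:ℝ)+1)/δ))) ^ (G - 1)) ≤ ENNReal.ofReal (g k) := by
      have hbnn : (0:ℝ) ≤ 1 - Real.exp (-l * (((k:ℝ)+1)/δ)) := hsub1 _ (by positivity)
      rw [← ENNReal.ofReal_pow hbnn]
      have hpow : (1 - Real.exp (-l * (((k:ℝ)+1)/δ))) ^ (G - 1) ≤
          Real.exp (-((G:ℝ) - 1) * Real.exp (-l * (((k:ℝ)+1)/δ))) := by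
        have h := aux_one_sub_pow_le (Real.exp (-l * (((k:ℝ)+1)/δ)))
          (Real.exp_pos _).le (by nlinarith [hsub1 (((k:ℝ)+1)/δ) (by positivity : (0:ℝ) ≤ ((k:ℝ)+1)/δ)]) (G - 1)
        rw [hGm1cast] at h
        calc (1 - Real.exp (-l * (((k:ℝ)+1)/δ))) ^ (G - 1)
            ≤ Real.exp (-(((G:ℝ) - 1) * Real.exp (-l * (((k:ℝ)+1)/δ)))) := h
          _ = Real.exp (-((G:ℝ) - 1) * Real.exp (-l * (((k:ℝ)+1)/δ))) := by ring_nf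
      calc ENNReal.ofReal (((k:ℝ) + 1) ^ 2) * (ENNReal.ofReal (Real.exp (-l * k)) *
            ENNReal.ofReal ((1 - Real.exp (-l * (((k:ℝ)+1)/δ))) ^ (G - 1)))
          ≤ ENNReal.ofReal (((k:ℝ) + 1) ^ 2) * (ENNReal.ofReal (Real.exp (-l * k)) *
            ENNReal.ofReal (Real.exp (-((G:ℝ) - 1) * Real.exp (-l * (((k:ℝ)+1)/δ))))) := by
            exact mul_le_mul_right (mul_le_mul_right (ENNReal.ofReal_le_ofReal hpow) _) _
        _ = ENNReal.ofReal (g k) := by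
            simp only [hgdef]
            rw [← ENNReal.ofReal_mul (Real.exp_pos (-l * (k:ℝ))).le,
              ← ENNReal.ofReal_mul (by positivity : (0:ℝ) ≤ ((k:ℝ)+1)^2)]
            congr 1
            ring
    calc ∫⁻ ω in E ∩ Z 0 ⁻¹' Set.Ioc (k : ℝ) ((k : ℝ) + 1),
          ENNReal.ofReal ((Z 0 ω) ^ 2) ∂μ
        ≤ ENNReal.ofReal (((k:ℝ) + 1) ^ 2) * μ (E ∩ Z 0 ⁻¹' Set.Ioc (k : ℝ) ((k : ℝ) + 1)) := hstep1
      _ ≤ ENNReal.ofReal (((k:ℝ) + 1) ^ 2) * (ENNReal.ofReal (Real.exp (-l * k)) *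
            ENNReal.ofReal (1 - Real.exp (-l * (((k:ℝ)+1)/δ))) ^ (G - 1)) :=
          mul_le_mul_right hstep2 _
      _ ≤ ENNReal.ofReal (g k) := hstep3
    -- cover of E
  have hcover : E ⊆ (E ∩ {ω | Z 0 ω ≤ 0}) ∪ ⋃ k : ℕ, (E ∩ Z 0 ⁻¹' Set.Ioc (k : ℝ) ((k : ℝ) + 1)) := by
    intro ω hω
    rcases le_or_gt (Z 0 ω) 0 with h | h
    · exact Or.inl ⟨hω, h⟩
    · refine Or.inr (Set.mem_iUnion.mpr ⟨⌈Z 0 ω⌉₊ - 1, hω, ?_, ?_⟩)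
      · have h1 : 1 ≤ ⌈Z 0 ω⌉₊ := Nat.one_le_ceil_iff.mpr h
        have h2 : ((⌈Z 0 ω⌉₊ - 1 : ℕ) : ℝ) = (⌈Z 0 ω⌉₊ : ℝ) - 1 := by
          rw [Nat.cast_sub h1, Nat.cast_one]
        have h3 := Nat.ceil_lt_add_one (R := ℝ) h.le
        show ((⌈Z 0 ω⌉₊ - 1 : ℕ) : ℝ) < Z 0 ω
        rw [h2]; linarith
      · have h2 : ((⌈Z 0 ω⌉₊ - 1 : ℕ) : ℝ) = (⌈Z 0 ω⌉₊ : ℝ) - 1 := by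
          rw [Nat.cast_sub (Nat.one_le_ceil_iff.mpr h), Nat.cast_one]
        have h3 := Nat.le_ceil (Z 0 ω)
        show Z 0 ω ≤ ((⌈Z 0 ω⌉₊ - 1 : ℕ) : ℝ) + 1
        rw [h2]; linarith
  have hBmeas : MeasurableSet (⋃ k : ℕ, (E ∩ Z 0 ⁻¹' Set.Ioc (k : ℝ) ((k : ℝ) + 1))) :=
    MeasurableSet.iUnion (fun k => hEmeas.inter ((hmeas 0) measurableSet_Ioc))
  have hdisj : Disjoint (E ∩ {ω | Z 0 ω ≤ 0})
      (⋃ k : ℕ, (E ∩ Z 0 ⁻¹' Set.Ioc (k : ℝ) ((k : ℝ) + 1))) := by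
    rw [Set.disjoint_left]
    rintro ω ⟨-, hle⟩ hB
    obtain ⟨k, -, hk1, -⟩ := Set.mem_iUnion.mp hB
    have : (0:ℝ) ≤ k := Nat.cast_nonneg k
    simp only [Set.mem_setOf_eq] at hle
    linarith
  have hLle : L ≤ ∑' k : ℕ, ENNReal.ofReal (g k) := by
    calc L ≤ ∫⁻ ω in (E ∩ {ω | Z 0 ω ≤ 0}) ∪ ⋃ k : ℕ, (E ∩ Z 0 ⁻¹' Set.Ioc (k : ℝ) ((k : ℝ) + 1)),
          ENNReal.ofReal ((Z 0 ω) ^ 2) ∂μ := lintegral_mono_set hcover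
      _ = (∫⁻ ω in E ∩ {ω | Z 0 ω ≤ 0}, ENNReal.ofReal ((Z 0 ω) ^ 2) ∂μ)
          + ∫⁻ ω in ⋃ k : ℕ, (E ∩ Z 0 ⁻¹' Set.Ioc (k : ℝ) ((k : ℝ) + 1)),
            ENNReal.ofReal ((Z 0 ω) ^ 2) ∂μ := lintegral_union hBmeas hdisj
      _ ≤ 0 + ∑' k : ℕ, ENNReal.ofReal (g k) := by
          apply add_le_add
          · rw [setLIntegral_measure_zero _ _ (measure_mono_null Set.inter_subset_right hμneg)]
          · exact le_trans (lintegral_iUnion_le _ _) (ENNReal.tsum_le_tsum hsl)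
      _ = ∑' k : ℕ, ENNReal.ofReal (g k) := by rw [zero_add]
  -- sum the series
  set K := ⌈δ * Real.log G / l⌉₊ with hKdef
  set r : ℝ := Real.exp (-(l/2)) with hrdef
  have hr1 : r < 1 := by rw [hrdef, Real.exp_lt_one_iff]; linarith
  have hrpos : 0 < r := Real.exp_pos _
  have hronn : 0 < 1 - r := by linarith
  set cK : ℝ := 2 * (1 + 16 / l ^ 2) * ((K : ℝ) + 1) ^ 2 * Real.exp (-l * (K:ℝ)) with hcKdef
  have hcKpos : 0 < cK := by positivity
  have hGm1nn : (0:ℝ) ≤ (G:ℝ) - 1 := by linarith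
  have htail : ∀ j : ℕ, g (j + K) ≤ cK * r ^ j := by
    intro j
    have hcast : ((j + K : ℕ) : ℝ) = (j : ℝ) + (K : ℝ) := by push_cast; ring
    have h1 : Real.exp (-((G : ℝ) - 1) * Real.exp (-l * ((((j + K : ℕ) : ℝ) + 1) / δ))) ≤ 1 := by
      rw [Real.exp_le_one_iff]
      have h2 : (0:ℝ) ≤ ((G:ℝ) - 1) * Real.exp (-l * ((((j + K:ℕ):ℝ) + 1) / δ)) :=
        mul_nonneg hGm1nn (Real.exp_pos _).le
      linarith
    calc g (j + K) ≤ (((j + K : ℕ):ℝ) + 1) ^ 2 * Real.exp (-l * ((j + K : ℕ):ℝ)) * 1 := by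
          simp only [hgdef]
          exact mul_le_mul_of_nonneg_left h1 (by positivity)
      _ = ((j:ℝ) + (K:ℝ) + 1) ^ 2 * Real.exp (-l * ((j:ℝ) + (K:ℝ))) := by rw [hcast]; ring
      _ ≤ cK * r ^ j := by rw [hcKdef, hrdef]; exact aux_tail_term l hl K j
  have htsum : (∑' k : ℕ, ENNReal.ofReal (g k)) ≤
      ENNReal.ofReal ((∑ k ∈ Finset.range K, g k) + cK * (1 - r)⁻¹) := by
    rw [← Summable.sum_add_tsum_nat_add' (f := fun k => ENNReal.ofReal (g k)) (k := K) ENNReal.summable]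
    rw [ENNReal.ofReal_add (Finset.sum_nonneg fun k _ => hgnn k) (by positivity)]
    apply add_le_add
    · rw [ENNReal.ofReal_sum_of_nonneg (fun k _ => hgnn k)]
    · calc (∑' j : ℕ, ENNReal.ofReal (g (j + K)))
          ≤ ∑' j : ℕ, ENNReal.ofReal (cK * r ^ j) :=
            ENNReal.tsum_le_tsum fun j => ENNReal.ofReal_le_ofReal (htail j)
        _ = ENNReal.ofReal cK * ∑' j : ℕ, (ENNReal.ofReal r) ^ j := by
            simp_rw [ENNReal.ofReal_mul hcKpos.le, ENNReal.ofReal_pow hrpos.le]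
            rw [ENNReal.tsum_mul_left]
        _ = ENNReal.ofReal cK * (1 - ENNReal.ofReal r)⁻¹ := by rw [ENNReal.tsum_geometric]
        _ = ENNReal.ofReal (cK * (1 - r)⁻¹) := by
            rw [ENNReal.ofReal_mul hcKpos.le]
            congr 1
            rw [ENNReal.ofReal_inv_of_pos hronn, ENNReal.ofReal_sub 1 hrpos.le,
              ENNReal.ofReal_one]
  have hupper_real : (∑ k ∈ Finset.range K, g k) + cK * (1 - r)⁻¹ ≤
      C * ((Real.log G)^2 * (G:ℝ)^(-δ)) := hC G hG4
  have hLup : L ≤ ENNReal.ofReal (C * ((Real.log G)^2 * (G:ℝ)^(-δ))) :=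
    le_trans hLle (le_trans htsum (ENNReal.ofReal_le_ofReal hupper_real))
  have hLne : L ≠ ⊤ := ne_top_of_le_ne_top ENNReal.ofReal_ne_top hLup
  have hXnn : (0:ℝ) ≤ C * ((Real.log G)^2 * (G:ℝ)^(-δ)) := by positivity
  have hup : (∫ ω in E, (Z 0 ω)^2 ∂μ) ≤ C * ((Real.log G)^2 * (G:ℝ)^(-δ)) := by
    rw [hint]; exact ENNReal.toReal_le_of_le_ofReal hXnn hLup
  ----------------------------------------------------------------
  -- LOWER BOUND
  ----------------------------------------------------------------
  set b : ℝ := Real.log G / l with hbdef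
  set a : ℝ := δ * (Real.log G / l) with hadef
  have hb0 : 0 < b := by positivity
  have ha0 : 0 < a := by positivity
  have hab : a ≤ b := by rw [hadef, hbdef]; nlinarith
  have hea : Real.exp (-l * a) = (G:ℝ)^(-δ) := by
    rw [hGpow, hadef]; congr 1; field_simp
  have heb : Real.exp (-l * b) = (G:ℝ)⁻¹ := by
    have h1 : -l * b = -Real.log G := by rw [hbdef]; field_simp
    rw [h1, Real.exp_neg, Real.exp_log hG0R]
  have hhalf : (G:ℝ)⁻¹ ≤ (G:ℝ)^(-δ)/2 := by
    have h2 : (4:ℝ)^((1:ℝ)/2) ≤ (G:ℝ)^((1:ℝ)/2) :=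
      Real.rpow_le_rpow (by norm_num) hG4R (by norm_num)
    have h3 : (4:ℝ)^((1:ℝ)/2) = 2 := by
      rw [show (4:ℝ) = 2^(2:ℕ) by norm_num, ← Real.rpow_natCast 2 2,
        ← Real.rpow_mul (by norm_num)]
      norm_num
    have h4 : (G:ℝ)^((1:ℝ)/2) ≤ (G:ℝ)^((1:ℝ)-δ) :=
      Real.rpow_le_rpow_of_exponent_le (by linarith) (by linarith)
    have h1 : (2:ℝ) ≤ (G:ℝ)^((1:ℝ)-δ) := by linarith
    have h5 : (G:ℝ)^(-δ) = (G:ℝ)^((1:ℝ)-δ) * (G:ℝ)⁻¹ := by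
      rw [← Real.rpow_neg_one (G:ℝ), ← Real.rpow_add hG0R]
      congr 1; ring
    have h6 : (0:ℝ) < (G:ℝ)⁻¹ := by positivity
    rw [h5]
    nlinarith
  have hGm1pos : (0:ℝ) < (G:ℝ) - 1 := by linarith
  have hlow2 : Real.exp (-1) ≤ (1 - (G:ℝ)⁻¹)^(G-1) := by
    have hstep : Real.exp (-(((G:ℝ)-1)⁻¹)) ≤ 1 - (G:ℝ)⁻¹ := by
      have h1 := Real.add_one_le_exp (((G:ℝ)-1)⁻¹)
      have h2 : Real.exp (-(((G:ℝ)-1)⁻¹)) = (Real.exp (((G:ℝ)-1)⁻¹))⁻¹ := Real.exp_neg _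
      have h3 : (Real.exp (((G:ℝ)-1)⁻¹))⁻¹ ≤ (((G:ℝ)-1)⁻¹ + 1)⁻¹ := by
        apply inv_anti₀ (by positivity) h1
      have h4 : (((G:ℝ)-1)⁻¹ + 1)⁻¹ = 1 - (G:ℝ)⁻¹ := by
        have hG1 : (G:ℝ) - 1 ≠ 0 := ne_of_gt hGm1pos
        have hGne : (G:ℝ) ≠ 0 := ne_of_gt hG0R
        field_simp
        ring
      rw [h2, ← h4]
      exact h3
    have hpow := pow_le_pow_left₀ (Real.exp_pos _).le hstep (G-1)
    have heq : (Real.exp (-(((G:ℝ)-1)⁻¹)))^(G-1) = Real.exp (-1) := by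
      rw [← Real.exp_nat_mul, hGm1cast]
      congr 1
      field_simp
    rw [← heq]
    exact hpow
  set D : Set Ω := ⋂ i ∈ Finset.range G, Z i ⁻¹' (if i = 0 then Set.Ioc a b else Set.Iic b)
    with hDdef
  have hμD : μ D = ENNReal.ofReal (Real.exp (-l * a) - Real.exp (-l * b)) *
      ENNReal.ofReal (1 - Real.exp (-l * b)) ^ (G - 1) := by
    rw [hDdef, hEvent _ _ measurableSet_Ioc hb0.le, hIoc a b ha0.le hab]
  have hmemD : ∀ ω ∈ D, Z 0 ω ∈ Set.Ioc a b := by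
    intro ω hω
    rw [hDdef, Set.mem_iInter₂] at hω
    have h := hω 0 (Finset.mem_range.mpr (by omega))
    simpa using h
  have hDE : D ⊆ E := by
    intro ω hω
    have h0 := hmemD ω hω
    rw [hDdef, Set.mem_iInter₂] at hω
    have hsup_le : (Finset.range G).sup' hne (fun i => Z i ω) ≤ b := by
      apply Finset.sup'_le
      intro i hi
      by_cases h : i = 0
      · subst h; exact h0.2
      · have h2 := hω i hi
        rw [if_neg h] at h2
        exact h2
    show δ * (Finset.range G).sup' hne (fun i => Z i ω) ≤ Z 0 ω
    nlinarith [h0.1]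
  have hDmeas : MeasurableSet D := by
    rw [hDdef]
    apply MeasurableSet.biInter (Set.to_countable _)
    intro i _
    by_cases h : i = 0
    · subst h; simp only [if_pos rfl]; exact (hmeas 0) measurableSet_Ioc
    · simp only [if_neg h]; exact (hmeas i) measurableSet_Iic
  have hLlb : ENNReal.ofReal (a^2 * ((G:ℝ)^(-δ)/2 * Real.exp (-1))) ≤ L := by
    have hsplit : ENNReal.ofReal (a^2 * ((G:ℝ)^(-δ)/2 * Real.exp (-1))) =
        ENNReal.ofReal (a^2) * (ENNReal.ofReal ((G:ℝ)^(-δ)/2) * ENNReal.ofReal (Real.exp (-1))) := by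
      rw [← ENNReal.ofReal_mul (by positivity : (0:ℝ) ≤ (G:ℝ)^(-δ)/2),
        ← ENNReal.ofReal_mul (by positivity : (0:ℝ) ≤ a^2)]
    rw [hsplit]
    have hm1 : ENNReal.ofReal ((G:ℝ)^(-δ)/2) ≤
        ENNReal.ofReal (Real.exp (-l * a) - Real.exp (-l * b)) := by
      apply ENNReal.ofReal_le_ofReal
      rw [hea, heb]
      linarith
    have hm2 : ENNReal.ofReal (Real.exp (-1)) ≤
        ENNReal.ofReal (1 - Real.exp (-l * b)) ^ (G - 1) := by
      rw [← ENNReal.ofReal_pow (hsub1 b hb0.le)]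
      apply ENNReal.ofReal_le_ofReal
      rw [heb]
      exact hlow2
    calc ENNReal.ofReal (a^2) * (ENNReal.ofReal ((G:ℝ)^(-δ)/2) * ENNReal.ofReal (Real.exp (-1)))
        ≤ ENNReal.ofReal (a^2) * (ENNReal.ofReal (Real.exp (-l * a) - Real.exp (-l * b)) *
            ENNReal.ofReal (1 - Real.exp (-l * b)) ^ (G - 1)) :=
          mul_le_mul_right (mul_le_mul' hm1 hm2) _
      _ = ENNReal.ofReal (a^2) * μ D := by rw [hμD]
      _ = ∫⁻ _ω in D, ENNReal.ofReal (a^2) ∂μ := (setLIntegral_const D _).symm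
      _ ≤ ∫⁻ ω in D, ENNReal.ofReal ((Z 0 ω)^2) ∂μ := by
          apply setLIntegral_mono ((hmeas 0).pow_const 2).ennreal_ofReal
          intro ω hω
          apply ENNReal.ofReal_le_ofReal
          have h := hmemD ω hω
          nlinarith [h.1, h.2, ha0]
      _ ≤ L := lintegral_mono_set hDE
  have hceq : a^2 * ((G:ℝ)^(-δ)/2 * Real.exp (-1)) =
      (δ^2 / l^2 * Real.exp (-1) / 2) * ((Real.log G)^2 * (G:ℝ)^(-δ)) := by
    rw [hadef]; ring
  have hlow : (δ^2 / l^2 * Real.exp (-1) / 2) * ((Real.log G)^2 * (G:ℝ)^(-δ)) ≤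
      ∫ ω in E, (Z 0 ω)^2 ∂μ := by
    rw [hint, ← hceq]
    have h := ENNReal.toReal_mono hLne hLlb
    rwa [ENNReal.toReal_ofReal (by positivity)] at h
  exact ⟨hlow, hup⟩
end

section
/- Let X₁,…,X_G be i.i.d. with E[X₁²] = 1 and |X₁| having full support on (0,∞), let M = max_i |X_i|, and let quantization with dead zone δ ∈ (0,1) produce X̂₁ = 0 when |X₁| < δM and satisfy |X₁ − X̂₁| ≤ |X₁| always. Then lim_{G→∞} E[(X₁ − X̂₁)²] = 1 for the Laplace model (exponential magnitudes), i.e. the per-element MSE tends to the variance of X₁. -/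
open MeasureTheory ProbabilityTheory Filter

/-- In the Laplace model (i.i.d. exponential magnitudes, unit second moment), a dead-zone
quantizer whose error never exceeds the magnitude of the element satisfies
`E[(X₁ - X̂₁)²] → 1` as the block size grows. -/
theorem stmt_6 {Ω : Type*} [MeasurableSpace Ω] (μ : Measure Ω) [IsProbabilityMeasure μ]
    (X : ℕ → Ω → ℝ) (Xhat : ℕ → Ω → ℝ) (l δ : ℝ) (hl : 0 < l)
    (hδ : δ ∈ Set.Ioo (0 : ℝ) 1)
    (hmeas : ∀ i, Measurable (X i)) (hmeasQ : ∀ G, Measurable (Xhat G))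
    (hindep : iIndepFun X μ)
    (hident : ∀ i, Measure.map (X i) μ = Measure.map (X 0) μ)
    (hsec : ∫ ω, (X 0 ω) ^ 2 ∂μ = 1)
    (hcdf : ∀ i, ∀ z : ℝ, 0 ≤ z →
      μ {ω | |X i ω| ≤ z} = ENNReal.ofReal (1 - Real.exp (-l * z)))
    (hdead : ∀ G : ℕ, ∀ ω,
      |X 0 ω| < δ * (Finset.range (G + 1)).sup' Finset.nonempty_range_add_one
          (fun i => |X i ω|) → Xhat G ω = 0)
    (hbd : ∀ G ω, |X 0 ω - Xhat G ω| ≤ |X 0 ω|) :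
    Tendsto (fun G : ℕ => ∫ ω, (X 0 ω - Xhat G ω) ^ 2 ∂μ) atTop (nhds 1) := by
  obtain ⟨hδ0, hδ1⟩ := hδ
  -- integrability of X₀²
  have hint : Integrable (fun ω => (X 0 ω) ^ 2) μ := by
    by_contra h
    rw [integral_undef h] at hsec
    norm_num at hsec
  -- for each K, almost surely some |X i| exceeds K
  have key : ∀ K : ℕ, μ {ω | ∀ i, |X i ω| ≤ (K : ℝ)} = 0 := by
    intro K
    set r : ENNReal := ENNReal.ofReal (1 - Real.exp (-l * K)) with hr
    have hr1 : r < 1 := by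
      rw [hr]
      exact ENNReal.ofReal_lt_one.mpr (by linarith [Real.exp_pos (-l * K)])
    have hmsK : MeasurableSet {x : ℝ | |x| ≤ (K : ℝ)} :=
      measurableSet_le measurable_abs measurable_const
    have hn : ∀ n : ℕ, μ {ω | ∀ i, |X i ω| ≤ (K : ℝ)} ≤ r ^ n := by
      intro n
      have hsub : {ω | ∀ i, |X i ω| ≤ (K : ℝ)} ⊆
          ⋂ i ∈ Finset.range n, (X i) ⁻¹' {x | |x| ≤ (K : ℝ)} := by
        intro ω hω
        simp only [Set.mem_iInter]
        intro i _
        exact hω i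
      refine le_trans (measure_mono hsub) ?_
      rw [hindep.meas_biInter (S := Finset.range n)
        (fun i _ => ⟨{x | |x| ≤ (K : ℝ)}, hmsK, rfl⟩)]
      have heach : ∀ i ∈ Finset.range n, μ ((X i) ⁻¹' {x | |x| ≤ (K : ℝ)}) = r := by
        intro i _
        have := hcdf i K (Nat.cast_nonneg K)
        simpa [Set.preimage, hr] using this
      rw [Finset.prod_congr rfl heach, Finset.prod_const, Finset.card_range]
    have htend := ENNReal.tendsto_pow_atTop_nhds_zero_of_lt_one hr1
    exact le_zero_iff.mp (ge_of_tendsto' htend hn)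
  -- almost every ω: eventually the dead zone kicks in
  have hae : ∀ᵐ ω ∂μ, ∀ᶠ G in atTop, (X 0 ω - Xhat G ω) ^ 2 = (X 0 ω) ^ 2 := by
    have h0 : μ (⋃ K : ℕ, {ω | ∀ i, |X i ω| ≤ (K : ℝ)}) = 0 :=
      le_zero_iff.mp (le_trans (measure_iUnion_le _) (by simp [key]))
    have hsub : {ω | ¬ ∀ᶠ G in atTop, (X 0 ω - Xhat G ω) ^ 2 = (X 0 ω) ^ 2} ⊆
        ⋃ K : ℕ, {ω | ∀ i, |X i ω| ≤ (K : ℝ)} := by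
      intro ω hω
      by_contra hc
      apply hω
      simp only [Set.mem_iUnion, Set.mem_setOf_eq, not_exists, not_forall, not_le] at hc
      obtain ⟨K, hK⟩ := exists_nat_gt (|X 0 ω| / δ)
      obtain ⟨i, hi⟩ := hc K
      refine eventually_atTop.mpr ⟨i, fun G hG => ?_⟩
      have hmem : i ∈ Finset.range (G + 1) := Finset.mem_range.mpr (by omega)
      have hle : |X i ω| ≤ (Finset.range (G + 1)).sup' Finset.nonempty_range_add_one
          (fun j => |X j ω|) := Finset.le_sup' (fun j => |X j ω|) hmem
      have hx : |X 0 ω| < δ * (Finset.range (G + 1)).sup' Finset.nonempty_range_add_one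
          (fun j => |X j ω|) := by
        have h1 : |X 0 ω| < δ * K := by
          rw [div_lt_iff₀ hδ0] at hK
          linarith
        have h2 : δ * (K : ℝ) < δ * (Finset.range (G + 1)).sup' Finset.nonempty_range_add_one
            (fun j => |X j ω|) := by
          apply mul_lt_mul_of_pos_left (lt_of_lt_of_le hi hle) hδ0
        linarith
      rw [hdead G ω hx]
      ring
    exact measure_mono_null hsub h0
  -- dominated convergence
  have hconv : Tendsto (fun G : ℕ => ∫ ω, (X 0 ω - Xhat G ω) ^ 2 ∂μ) atTop
      (nhds (∫ ω, (X 0 ω) ^ 2 ∂μ)) := by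
    refine tendsto_integral_of_dominated_convergence (fun ω => (X 0 ω) ^ 2)
      (fun G => (((hmeas 0).sub (hmeasQ G)).pow_const 2).aestronglyMeasurable) hint ?_ ?_
    · intro G
      filter_upwards with ω
      have h1 : |X 0 ω - Xhat G ω| ^ 2 ≤ |X 0 ω| ^ 2 :=
        pow_le_pow_left₀ (abs_nonneg _) (hbd G ω) 2
      rw [sq_abs, sq_abs] at h1
      simpa [Real.norm_eq_abs, abs_of_nonneg (sq_nonneg (X 0 ω - Xhat G ω))] using h1
    · filter_upwards [hae] with ω hω
      exact Tendsto.congr' (hω.mono fun G hG => hG.symm) tendsto_const_nhds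
  rwa [hsec] at hconv
end

section
/- Let Q: ℝ₊ → ℝ₊ satisfy Q(x·2^k) = 2^k Q(x) for all integers k, and let X be a random variable with density f supported on [2^a, 2^b] for integers a < b. Suppose |f(x) − f(y)| ≤ α whenever y ∈ [x/√2, x·√2], and (x − Q(x))²/x² ≤ M for all x. Then E[(X − Q(X))²/X²] = ∫₁² (x − Q(x))²/x² dx · Σ_{i=a}^{b−1} 2^i f(2^i) + O((2^b − 2^a)·M·α). -/
open MeasureTheory


private lemma icc_insert_int (a b : ℤ) (h : a ≤ b + 1) :
    Finset.Icc a (b + 1) = insert (b + 1) (Finset.Icc a b) := by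
  ext x; simp only [Finset.mem_Icc, Finset.mem_insert]; omega

private lemma sum_Icc_eq_range' (F : ℤ → ℝ) (a : ℤ) (n : ℕ) :
    ∑ i ∈ Finset.Icc a (a + n - 1), F i = ∑ k ∈ Finset.range n, F (a + k) := by
  induction n with
  | zero => simp
  | succ m ih =>
    have h1 : a + (m + 1 : ℕ) - 1 = (a + m - 1) + 1 := by push_cast; ring
    rw [h1, icc_insert_int _ _ (by omega), Finset.sum_insert (by simp), ih,
      Finset.sum_range_succ]
    have h2 : a + m - 1 + 1 = a + (m : ℤ) := by ring
    rw [h2, add_comm]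

private lemma sum_Icc_eq_range (F : ℤ → ℝ) (a b : ℤ) (h : a ≤ b) :
    ∑ i ∈ Finset.Icc a (b - 1), F i = ∑ k ∈ Finset.range (b - a).toNat, F (a + k) := by
  rw [show (b - 1) = a + ((b-a).toNat : ℤ) - 1 by
    rw [Int.toNat_of_nonneg (by omega)]; ring, sum_Icc_eq_range']

private lemma sum_pow_two' (a : ℤ) (n : ℕ) :
    ∑ k ∈ Finset.range n, (2:ℝ) ^ (a + (k:ℤ)) = 2 ^ (a + (n:ℤ)) - 2 ^ a := by
  induction n with
  | zero => simp
  | succ m ih =>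
    rw [Finset.sum_range_succ, ih]
    have h1 : (2:ℝ) ^ (a + ((m:ℤ)+1)) = 2 * 2 ^ (a + (m:ℤ)) := by
      rw [show a + ((m:ℤ)+1) = (a + m) + 1 by ring, zpow_add₀ (two_ne_zero) _ 1]; ring
    push_cast at h1 ⊢
    rw [h1]; ring

private lemma sum_pow_two (a b : ℤ) (h : a ≤ b) :
    ∑ k ∈ Finset.range (b - a).toNat, (2:ℝ) ^ (a + (k:ℤ)) = 2 ^ b - 2 ^ a := by
  rw [sum_pow_two', Int.toNat_of_nonneg (by omega)]
  norm_num

private lemma qmp_mul_left {c : ℝ} (hc : c ≠ 0) :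
    Measure.QuasiMeasurePreserving (fun x : ℝ => c * x) volume volume := by
  refine ⟨measurable_const_mul c, ?_⟩
  rw [Real.map_volume_mul_left hc]
  intro s hs
  simp [hs]

private lemma qmp_mul_left_restrict {c : ℝ} (hc : c ≠ 0) {s : Set ℝ} (hs : MeasurableSet s) :
    Measure.QuasiMeasurePreserving (fun x : ℝ => c * x)
      (volume.restrict ((fun x : ℝ => c * x) ⁻¹' s)) (volume.restrict s) := by
  refine ⟨measurable_const_mul c, ?_⟩
  rw [← Measure.restrict_map (measurable_const_mul c) hs, Real.map_volume_mul_left hc,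
    Measure.restrict_smul]
  intro t ht
  simp [ht]

private lemma my_zpow_ge {r : ℝ} {i : ℤ} (h : r ≤ (i:ℝ)) : (2:ℝ) ^ r ≤ (2:ℝ) ^ i := by
  rw [← Real.rpow_intCast 2 i]
  exact (Real.rpow_le_rpow_left_iff one_lt_two).mpr h

private lemma my_zpow_le {r : ℝ} {i : ℤ} (h : (i:ℝ) ≤ r) : (2:ℝ) ^ i ≤ (2:ℝ) ^ r := by
  rw [← Real.rpow_intCast 2 i]
  exact (Real.rpow_le_rpow_left_iff one_lt_two).mpr h

private lemma mem_dyadic {x : ℝ} (hx : 0 < x) :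
    ∃ i : ℤ, x ∈ Set.Icc ((2:ℝ)^i) ((2:ℝ)^(i+1)) := by
  refine ⟨⌊Real.logb 2 x⌋, ?_, ?_⟩
  · calc (2:ℝ) ^ (⌊Real.logb 2 x⌋) ≤ 2 ^ (Real.logb 2 x) :=
        my_zpow_le (Int.floor_le _)
      _ = x := Real.rpow_logb two_pos (by norm_num) hx
  · calc x = 2 ^ (Real.logb 2 x) := (Real.rpow_logb two_pos (by norm_num) hx).symm
      _ ≤ 2 ^ (⌊Real.logb 2 x⌋ + 1) := my_zpow_ge (by push_cast; exact (Int.lt_floor_add_one _).le)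

private lemma exists_dyadic_in_window {x z : ℝ} (hx : 0 < x) (hz1 : 1 ≤ z) (hz2 : z ≤ 2) :
    ∃ i : ℤ, (2:ℝ)^i * z ∈ Set.Icc (x / Real.sqrt 2) (x * Real.sqrt 2) := by
  set s := Real.sqrt 2 with hs
  have hs2 : s * s = 2 := Real.mul_self_sqrt (by norm_num)
  have hs0 : 0 < s := Real.sqrt_pos.mpr (by norm_num)
  have hz0 : 0 < z := lt_of_lt_of_le one_pos hz1
  set t := x / (s * z) with ht
  have ht0 : 0 < t := div_pos hx (mul_pos hs0 hz0)
  refine ⟨⌈Real.logb 2 t⌉, ?_, ?_⟩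
  · have h1 : t ≤ (2:ℝ) ^ (⌈Real.logb 2 t⌉ : ℤ) := by
      calc t = 2 ^ (Real.logb 2 t) := (Real.rpow_logb two_pos (by norm_num) ht0).symm
        _ ≤ _ := my_zpow_ge (Int.le_ceil _)
    have : x / s = t * z := by rw [ht]; field_simp
    rw [this]
    exact mul_le_mul_of_nonneg_right h1 hz0.le
  · have h2 : (2:ℝ) ^ (⌈Real.logb 2 t⌉ : ℤ) ≤ 2 * t := by
      calc (2:ℝ) ^ (⌈Real.logb 2 t⌉ : ℤ) ≤ 2 ^ (Real.logb 2 t + 1) := by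
            refine my_zpow_le ?_
            push_cast
            exact (Int.ceil_lt_add_one _).le
        _ = 2 * t := by
            rw [Real.rpow_add two_pos, Real.rpow_logb two_pos (by norm_num) ht0,
              Real.rpow_one]; ring
    have hxs : 2 * t * z = x * s := by
      rw [ht]; field_simp; linear_combination (-1 : ℝ) * hs2
    calc (2:ℝ) ^ (⌈Real.logb 2 t⌉ : ℤ) * z ≤ 2 * t * z :=
        mul_le_mul_of_nonneg_right h2 hz0.le
      _ = x * s := hxs

/-- Consistency of the relative quantization error for smooth densities: the expected
relative squared error equals the base profile integral on `[1,2]` weighted by the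
discretized density, up to a remainder `O((2^b - 2^a) · M · α)` with an absolute constant. -/
theorem stmt_9 :
    ∃ C : ℝ, 0 < C ∧
      ∀ (Q f : ℝ → ℝ) (a b : ℤ) (α M : ℝ), a < b →
        (∀ x : ℝ, 0 < x → ∀ k : ℤ, Q (x * 2 ^ k) = 2 ^ k * Q x) →
        (∀ x, 0 ≤ f x) →
        (∀ x, x ∉ Set.Icc ((2 : ℝ) ^ a) ((2 : ℝ) ^ b) → f x = 0) →
        (∫ x, f x) = 1 →
        (∀ x y : ℝ, x ∈ Set.Icc ((2 : ℝ) ^ a) ((2 : ℝ) ^ b) →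
          y ∈ Set.Icc (x / Real.sqrt 2) (x * Real.sqrt 2) → |f x - f y| ≤ α) →
        (∀ x : ℝ, 0 < x → (x - Q x) ^ 2 / x ^ 2 ≤ M) →
        |(∫ x, (x - Q x) ^ 2 / x ^ 2 * f x) -
            (∫ x in Set.Icc (1 : ℝ) 2, (x - Q x) ^ 2 / x ^ 2) *
              ∑ i ∈ Finset.Icc a (b - 1), (2 : ℝ) ^ i * f ((2 : ℝ) ^ i)| ≤
          C * ((2 : ℝ) ^ b - (2 : ℝ) ^ a) * M * α := by
  refine ⟨2, two_pos, ?_⟩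
  intro Q f a b α M hab hQ hf0 hsupp hintf hsmooth hM
  set g : ℝ → ℝ := fun x => (x - Q x) ^ 2 / x ^ 2 with hgdef
  set s2 := Real.sqrt 2 with hs2def
  have hs2 : s2 * s2 = 2 := Real.mul_self_sqrt (by norm_num)
  have hs2pos : 0 < s2 := Real.sqrt_pos.mpr (by norm_num)
  have hs2one : 1 ≤ s2 := by nlinarith
  have hgnn : ∀ x, 0 ≤ g x := fun x => div_nonneg (sq_nonneg _) (sq_nonneg _)
  have hgM : ∀ x : ℝ, 0 < x → g x ≤ M := hM
  have hM0 : 0 ≤ M := le_trans (hgnn 1) (hM 1 one_pos)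
  have hpow_pos : ∀ i : ℤ, (0:ℝ) < 2 ^ i := fun i => zpow_pos (by norm_num) i
  have h2ab : (2:ℝ) ^ a < 2 ^ b := zpow_lt_zpow_right₀ one_lt_two hab
  have hfInt : Integrable f := by
    by_contra hc
    rw [integral_undef hc] at hintf
    norm_num at hintf
  have hα0 : 0 ≤ α := by
    have h1 : (2:ℝ)^a ∈ Set.Icc ((2:ℝ)^a) ((2:ℝ)^b) := ⟨le_rfl, h2ab.le⟩
    have h2 : (2:ℝ)^a ∈ Set.Icc ((2:ℝ)^a / s2) ((2:ℝ)^a * s2) :=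
      ⟨div_le_self (hpow_pos a).le hs2one, le_mul_of_one_le_right (hpow_pos a).le hs2one⟩
    have := hsmooth (2^a) (2^a) h1 h2
    simpa using this
  have hgscale : ∀ x : ℝ, 0 < x → ∀ k : ℤ, g ((2:ℝ) ^ k * x) = g x := by
    intro x hx k
    have hQ' := hQ x hx k
    have h2k : ((2:ℝ) ^ k) ≠ 0 := (hpow_pos k).ne'
    have hx0 : x ≠ 0 := hx.ne'
    rw [mul_comm ((2:ℝ)^k) x]
    simp only [hgdef]
    rw [hQ']
    field_simp
  have hsmooth2 : ∀ i : ℤ, a ≤ i → i ≤ b - 1 → ∀ t : ℝ, t ∈ Set.Icc (1:ℝ) 2 →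
      |f ((2:ℝ) ^ i * t) - f ((2:ℝ) ^ i)| ≤ 2 * α := by
    intro i hai hib t ht
    have hipos := hpow_pos i
    have h2i1 : (2:ℝ) ^ (i + 1) = 2 ^ i * 2 := by
      rw [zpow_add₀ (two_ne_zero) i 1, zpow_one]
    have hx0mem : (2:ℝ)^i * s2 ∈ Set.Icc ((2:ℝ)^a) ((2:ℝ)^b) := by
      constructor
      · calc (2:ℝ)^a ≤ 2^i := zpow_le_zpow_right₀ one_le_two hai
          _ ≤ 2^i * s2 := le_mul_of_one_le_right hipos.le hs2one
      · calc (2:ℝ)^i * s2 ≤ 2^i * 2 := by nlinarith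
          _ = 2^(i+1) := h2i1.symm
          _ ≤ 2^b := zpow_le_zpow_right₀ one_le_two (by omega)
    have hdiv : (2:ℝ)^i * s2 / s2 = 2^i := by field_simp
    have hmul : (2:ℝ)^i * s2 * s2 = 2^i * 2 := by rw [mul_assoc, hs2]
    have hmem1 : (2:ℝ)^i * t ∈ Set.Icc ((2:ℝ)^i * s2 / s2) ((2:ℝ)^i * s2 * s2) := by
      rw [hdiv, hmul]
      exact ⟨le_mul_of_one_le_right hipos.le ht.1, mul_le_mul_of_nonneg_left ht.2 hipos.le⟩
    have hmem2 : (2:ℝ)^i ∈ Set.Icc ((2:ℝ)^i * s2 / s2) ((2:ℝ)^i * s2 * s2) := by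
      rw [hdiv, hmul]
      exact ⟨le_rfl, le_mul_of_one_le_right hipos.le one_le_two⟩
    have h1 := hsmooth _ _ hx0mem hmem1
    have h2 := hsmooth _ _ hx0mem hmem2
    calc |f ((2:ℝ)^i * t) - f ((2:ℝ)^i)|
        ≤ |f ((2:ℝ)^i * t) - f ((2:ℝ)^i * s2)| + |f ((2:ℝ)^i * s2) - f ((2:ℝ)^i)| :=
          abs_sub_le _ _ _
      _ ≤ α + α := add_le_add (by rwa [abs_sub_comm] at h1) h2
      _ = 2 * α := by ring
  have hprod_bound : ∀ x, ‖g x * f x‖ ≤ M * f x := by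
    intro x
    rw [Real.norm_eq_abs, abs_mul, abs_of_nonneg (hgnn x), abs_of_nonneg (hf0 x)]
    by_cases hfx : f x = 0
    · simp [hfx]
    · have hxmem : x ∈ Set.Icc ((2:ℝ)^a) ((2:ℝ)^b) := by
        by_contra hc; exact hfx (hsupp x hc)
      have hxpos : 0 < x := lt_of_lt_of_le (hpow_pos a) hxmem.1
      exact mul_le_mul_of_nonneg_right (hgM x hxpos) (hf0 x)
  have hT1 : |∫ x, g x * f x| ≤ M := by
    calc |∫ x, g x * f x| = ‖∫ x, g x * f x‖ := (Real.norm_eq_abs _).symm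
      _ ≤ ∫ x, M * f x := norm_integral_le_of_norm_le (hfInt.const_mul M)
          (Filter.Eventually.of_forall hprod_bound)
      _ = M := by rw [integral_const_mul, hintf, mul_one]
  have hIccfin : volume (Set.Icc (1:ℝ) 2) < ⊤ := by
    rw [Real.volume_Icc]; exact ENNReal.ofReal_lt_top
  have hIbound : |∫ x in Set.Icc (1:ℝ) 2, g x| ≤ M := by
    by_cases hgi : IntegrableOn g (Set.Icc (1:ℝ) 2)
    · calc |∫ x in Set.Icc (1:ℝ) 2, g x| = ‖∫ x in Set.Icc (1:ℝ) 2, g x‖ :=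
          (Real.norm_eq_abs _).symm
        _ ≤ ∫ _x in Set.Icc (1:ℝ) 2, M := by
            refine norm_integral_le_of_norm_le ((integrableOn_const_iff).mpr (Or.inr hIccfin)) ?_
            refine (ae_restrict_mem measurableSet_Icc).mono fun x hx => ?_
            rw [Real.norm_eq_abs, abs_of_nonneg (hgnn x)]
            exact hgM x (lt_of_lt_of_le one_pos hx.1)
        _ = M := by
            rw [setIntegral_const, Real.volume_real_Icc_of_le one_le_two]
            norm_num
    · rw [integral_undef hgi]; simpa using hM0
  have hdyadic_meas : AEMeasurable g (volume.restrict (Set.Icc (1:ℝ) 2)) →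
      ∀ i : ℤ, AEMeasurable g (volume.restrict (Set.Icc ((2:ℝ)^i) ((2:ℝ)^(i+1)))) := by
    intro hg i
    have h2i := hpow_pos i
    have h2ni := hpow_pos (-i)
    have hinv : (2:ℝ)^(-i) * (2:ℝ)^i = 1 := by
      rw [← zpow_add₀ (two_ne_zero)]; norm_num
    have h2i1 : (2:ℝ) ^ (i + 1) = 2 ^ i * 2 := by
      rw [zpow_add₀ (two_ne_zero) i 1, zpow_one]
    have hpre : (fun y : ℝ => (2:ℝ)^(-i) * y) ⁻¹' (Set.Icc 1 2)
        = Set.Icc ((2:ℝ)^i) ((2:ℝ)^(i+1)) := by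
      ext y
      simp only [Set.mem_preimage, Set.mem_Icc, h2i1]
      constructor
      · rintro ⟨h1, h2⟩
        constructor <;> nlinarith
      · rintro ⟨h1, h2⟩
        constructor <;> nlinarith
    have hq := qmp_mul_left_restrict (c := (2:ℝ)^(-i)) h2ni.ne' (s := Set.Icc (1:ℝ) 2)
      measurableSet_Icc
    rw [hpre] at hq
    refine (hg.comp_quasiMeasurePreserving hq).congr ?_
    refine (ae_restrict_mem measurableSet_Icc).mono fun y hy => ?_
    have hy0 : 0 < (2:ℝ)^(-i) * y := mul_pos h2ni (lt_of_lt_of_le h2i hy.1)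
    have := hgscale ((2:ℝ)^(-i) * y) hy0 i
    rw [← mul_assoc, mul_comm ((2:ℝ)^i) ((2:ℝ)^(-i)), hinv, one_mul] at this
    exact this.symm
  have hcover_meas : AEMeasurable g (volume.restrict (Set.Icc (1:ℝ) 2)) →
      Integrable (fun x => g x * f x) := by
    intro hg
    have hmeasab : AEMeasurable g (volume.restrict (Set.Icc ((2:ℝ)^a) ((2:ℝ)^b))) := by
      have hu : AEMeasurable g (volume.restrict (⋃ i : ℤ, Set.Icc ((2:ℝ)^i) ((2:ℝ)^(i+1)))) :=
        aemeasurable_iUnion_iff.mpr (hdyadic_meas hg)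
      refine hu.mono_measure (Measure.restrict_mono ?_ le_rfl)
      intro x hx
      obtain ⟨i, hi⟩ := mem_dyadic (lt_of_lt_of_le (hpow_pos a) hx.1)
      exact Set.mem_iUnion.mpr ⟨i, hi⟩
    have hind : (fun x => g x * f x)
        = (Set.Icc ((2:ℝ)^a) ((2:ℝ)^b)).indicator (fun x => g x * f x) := by
      funext x
      by_cases hx : x ∈ Set.Icc ((2:ℝ)^a) ((2:ℝ)^b)
      · rw [Set.indicator_of_mem hx]
      · rw [Set.indicator_of_notMem hx, hsupp x hx, mul_zero]
    have hasm : AEStronglyMeasurable (fun x => g x * f x) volume := by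
      rw [hind]
      refine (aestronglyMeasurable_indicator_iff measurableSet_Icc).mpr ?_
      exact ((hmeasab.mul (hfInt.aemeasurable.restrict)).aestronglyMeasurable)
    exact Integrable.mono' (hfInt.const_mul M) hasm (Filter.Eventually.of_forall hprod_bound)
  have hrecover : (∀ x ∈ Set.Icc (1:ℝ) 2, ∃ i : ℤ, f ((2:ℝ)^i * x) ≠ 0) →
      Integrable (fun x => g x * f x) → AEMeasurable g (volume.restrict (Set.Icc (1:ℝ) 2)) := by
    intro hnz hh
    set fm := hfInt.1.mk f with hfmdef
    have hfm_meas : StronglyMeasurable fm := hfInt.1.stronglyMeasurable_mk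
    have hfm_eq : f =ᵐ[volume] fm := hfInt.1.ae_eq_mk
    set hm := hh.1.mk (fun x => g x * f x) with hhmdef
    have hhm_meas : StronglyMeasurable hm := hh.1.stronglyMeasurable_mk
    have hhm_eq : (fun x => g x * f x) =ᵐ[volume] hm := hh.1.ae_eq_mk
    have hqmp : ∀ i : ℤ, Measure.QuasiMeasurePreserving (fun x : ℝ => (2:ℝ)^i * x)
        volume volume := fun i => qmp_mul_left (hpow_pos i).ne'
    set Nbad : Set ℝ := {x | f x ≠ fm x} ∪ {x | g x * f x ≠ hm x} with hNdef
    have hNbadnull : volume Nbad = 0 := measure_union_null hfm_eq hhm_eq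
    set N : ℤ → Set ℝ := fun i => (fun x : ℝ => (2:ℝ)^i * x) ⁻¹' Nbad with hNidef
    have hNnull : ∀ i, volume (N i) = 0 := fun i => (hqmp i).preimage_null hNbadnull
    set B : ℤ → Set ℝ := fun i =>
      Set.Icc (1:ℝ) 2 ∩ (fun x : ℝ => (2:ℝ)^i * x) ⁻¹' {y | fm y ≠ 0} with hBdef
    have hBmeas : ∀ i, MeasurableSet (B i) := by
      intro i
      refine measurableSet_Icc.inter ?_
      exact (measurable_const_mul _) ((hfm_meas.measurable (measurableSet_singleton 0)).compl)
    have hnotbad : ∀ i : ℤ, ∀ x : ℝ, x ∉ N i →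
        f ((2:ℝ)^i * x) = fm ((2:ℝ)^i * x) ∧
          g ((2:ℝ)^i * x) * f ((2:ℝ)^i * x) = hm ((2:ℝ)^i * x) := by
      intro i x hx
      simp only [hNidef, Set.mem_preimage, hNdef, Set.mem_union, Set.mem_setOf_eq, not_or,
        not_not] at hx
      exact hx
    have hGmeas : ∀ i, AEMeasurable g (volume.restrict (B i)) := by
      intro i
      refine AEMeasurable.congr
        (f := fun x => hm ((2:ℝ)^i * x) / fm ((2:ℝ)^i * x)) ?_ ?_
      · exact ((hhm_meas.measurable.comp (measurable_const_mul _)).div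
          (hfm_meas.measurable.comp (measurable_const_mul _))).aemeasurable
      · have h1 : ∀ᵐ x ∂(volume.restrict (B i)), x ∉ N i := by
          refine ae_restrict_of_ae ?_
          have : ∀ᵐ x ∂(volume : Measure ℝ), x ∉ N i := by
            rw [MeasureTheory.ae_iff]
            simpa using hNnull i
          exact this
        have h2 : ∀ᵐ x ∂(volume.restrict (B i)), x ∈ B i := ae_restrict_mem (hBmeas i)
        filter_upwards [h1, h2] with x hxN hxB
        obtain ⟨hx12, hxf⟩ := hxB
        have hxpos : (0:ℝ) < x := lt_of_lt_of_le one_pos hx12.1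
        have hxf' : fm ((2:ℝ)^i * x) ≠ 0 := hxf
        obtain ⟨e1, e2⟩ := hnotbad i x hxN
        have hf0' : f ((2:ℝ)^i * x) ≠ 0 := by rw [e1]; exact hxf'
        rw [← e2, ← e1, mul_div_assoc, div_self hf0', mul_one, hgscale x hxpos i]
    have hcov : Set.Icc (1:ℝ) 2 ⊆ (⋃ i : ℤ, B i) ∪ (⋃ i : ℤ, N i) := by
      intro x hx
      obtain ⟨i, hi⟩ := hnz x hx
      by_cases hxN : x ∈ N i
      · exact Or.inr (Set.mem_iUnion.mpr ⟨i, hxN⟩)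
      · refine Or.inl (Set.mem_iUnion.mpr ⟨i, ⟨hx, ?_⟩⟩)
        have := (hnotbad i x hxN).1
        simp only [Set.mem_preimage, Set.mem_setOf_eq]
        rw [← this]
        exact hi
    have hU : AEMeasurable g (volume.restrict (⋃ i : ℤ, B i)) :=
      aemeasurable_iUnion_iff.mpr hGmeas
    have hNU : volume (⋃ i : ℤ, N i) = 0 := measure_iUnion_null hNnull
    have hUN : AEMeasurable g (volume.restrict ((⋃ i : ℤ, B i) ∪ ⋃ i : ℤ, N i)) := by
      refine AEMeasurable.mono_measure ?_ (Measure.restrict_union_le _ _)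
      refine hU.add_measure ?_
      rw [Measure.restrict_eq_zero.mpr hNU]
      exact aemeasurable_zero_measure
    exact hUN.mono_measure (Measure.restrict_mono hcov le_rfl)
  -- main case split
  by_cases hz : ∃ z ∈ Set.Icc (1:ℝ) 2, ∀ i : ℤ, f ((2:ℝ)^i * z) = 0
  · -- degenerate case : f is uniformly ≤ α
    obtain ⟨z, hzmem, hfz⟩ := hz
    have hfle : ∀ x ∈ Set.Icc ((2:ℝ)^a) ((2:ℝ)^b), f x ≤ α := by
      intro x hx
      obtain ⟨i, hi⟩ :=
        exists_dyadic_in_window (lt_of_lt_of_le (hpow_pos a) hx.1) hzmem.1 hzmem.2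
      have := hsmooth x ((2:ℝ)^i * z) hx hi
      rw [hfz i, sub_zero] at this
      exact (le_abs_self _).trans this
    have hone : 1 ≤ α * ((2:ℝ)^b - 2^a) := by
      have hmono : (∫ x, f x) ≤ ∫ x, (Set.Icc ((2:ℝ)^a) ((2:ℝ)^b)).indicator (fun _ => α) x := by
        refine integral_mono hfInt ?_ ?_
        · exact (integrable_indicator_iff measurableSet_Icc).mpr
            ((integrableOn_const_iff).mpr (Or.inr (by rw [Real.volume_Icc]; exact ENNReal.ofReal_lt_top)))
        · intro x
          by_cases hx : x ∈ Set.Icc ((2:ℝ)^a) ((2:ℝ)^b)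
          · rw [Set.indicator_of_mem hx]; exact hfle x hx
          · rw [Set.indicator_of_notMem hx, hsupp x hx]
      rw [hintf, integral_indicator_const _ measurableSet_Icc, Real.volume_real_Icc_of_le h2ab.le,
        smul_eq_mul] at hmono
      linarith
    have hSnn : (0:ℝ) ≤ ∑ i ∈ Finset.Icc a (b-1), (2:ℝ)^i * f (2^i) :=
      Finset.sum_nonneg fun i _ => mul_nonneg (hpow_pos i).le (hf0 _)
    have hS : |∑ i ∈ Finset.Icc a (b-1), (2:ℝ)^i * f (2^i)| ≤ α * ((2:ℝ)^b - 2^a) := by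
      rw [abs_of_nonneg hSnn]
      calc ∑ i ∈ Finset.Icc a (b-1), (2:ℝ)^i * f (2^i)
          ≤ ∑ i ∈ Finset.Icc a (b-1), (2:ℝ)^i * α := by
            refine Finset.sum_le_sum fun i hi => ?_
            rw [Finset.mem_Icc] at hi
            refine mul_le_mul_of_nonneg_left (hfle _ ⟨?_, ?_⟩) (hpow_pos i).le
            · exact zpow_le_zpow_right₀ one_le_two hi.1
            · exact zpow_le_zpow_right₀ one_le_two (by omega)
        _ = α * ((2:ℝ)^b - 2^a) := by
            rw [← Finset.sum_mul, sum_Icc_eq_range (fun i => (2:ℝ)^i) a b hab.le,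
              sum_pow_two a b hab.le, mul_comm]
    calc |(∫ x, g x * f x) -
          (∫ x in Set.Icc (1:ℝ) 2, g x) * ∑ i ∈ Finset.Icc a (b-1), (2:ℝ)^i * f (2^i)|
        ≤ |∫ x, g x * f x| +
          |(∫ x in Set.Icc (1:ℝ) 2, g x) * ∑ i ∈ Finset.Icc a (b-1), (2:ℝ)^i * f (2^i)| :=
          abs_sub _ _
      _ ≤ M + M * (α * ((2:ℝ)^b - 2^a)) := by
          refine add_le_add hT1 ?_
          rw [abs_mul]
          exact mul_le_mul hIbound hS (abs_nonneg _) hM0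
      _ ≤ M * (α * ((2:ℝ)^b - 2^a)) + M * (α * ((2:ℝ)^b - 2^a)) := by nlinarith
      _ = 2 * ((2:ℝ)^b - 2^a) * M * α := by ring
  · push_neg at hz
    by_cases hh : Integrable (fun x => g x * f x)
    · -- honest case
      have hgm : AEMeasurable g (volume.restrict (Set.Icc (1:ℝ) 2)) := hrecover hz hh
      have hgInt : IntegrableOn g (Set.Icc (1:ℝ) 2) := by
        refine Integrable.mono'
          (((integrableOn_const_iff).mpr (Or.inr hIccfin)) :
            IntegrableOn (fun _ => M) (Set.Icc (1:ℝ) 2) volume)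
          hgm.aestronglyMeasurable ?_
        refine (ae_restrict_mem measurableSet_Icc).mono fun x hx => ?_
        rw [Real.norm_eq_abs, abs_of_nonneg (hgnn x)]
        exact hgM x (lt_of_lt_of_le one_pos hx.1)
      set n := (b - a).toNat with hndef
      have hn : ((n:ℤ)) = b - a := Int.toNat_of_nonneg (by omega)
      set u : ℕ → ℝ := fun k => (2:ℝ)^(a + (k:ℤ)) with hudef
      set I12 := ∫ x in (1:ℝ)..2, g x with hI12def
      have hI12 : (∫ x in Set.Icc (1:ℝ) 2, g x) = I12 := by
        rw [hI12def, intervalIntegral.integral_of_le one_le_two, integral_Icc_eq_integral_Ioc]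
      have hIcc_uIcc : Set.uIcc (1:ℝ) 2 = Set.Icc 1 2 := Set.uIcc_of_le one_le_two
      have hfscale_meas : ∀ i : ℤ, AEMeasurable (fun x => f ((2:ℝ)^i * x))
          (volume.restrict (Set.Icc (1:ℝ) 2)) := fun i =>
        ((hfInt.aemeasurable.comp_quasiMeasurePreserving
          (qmp_mul_left (hpow_pos i).ne')).restrict)
      have hkey : ∀ k : ℕ, (k:ℤ) < b - a →
          |(∫ x in u k..u (k+1), g x * f x) - u k * (f (u k) * I12)| ≤ u k * (2*M*α) := by
        intro k hk
        set i : ℤ := a + k with hidef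
        have hai : a ≤ i := by omega
        have hib : i ≤ b - 1 := by omega
        have hc0 : (0:ℝ) < 2^i := hpow_pos i
        have huk : u k = 2^i := rfl
        have huk1 : u (k+1) = 2^i * 2 := by
          simp only [hudef]
          push_cast
          rw [show a + ((k:ℤ)+1) = i + 1 by omega, zpow_add₀ two_ne_zero, zpow_one]
        have hΔ : ∀ x ∈ Set.Icc (1:ℝ) 2, |f ((2:ℝ)^i * x) - f ((2:ℝ)^i)| ≤ 2 * α :=
          fun x hx => hsmooth2 i hai hib x hx
        have intΔ : IntegrableOn (fun x => g x * (f ((2:ℝ)^i * x) - f ((2:ℝ)^i)))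
            (Set.Icc (1:ℝ) 2) := by
          refine Integrable.mono'
            (((integrableOn_const_iff).mpr (Or.inr hIccfin)) :
              IntegrableOn (fun _ => M * (2*α)) (Set.Icc (1:ℝ) 2) volume)
            ((hgm.mul ((hfscale_meas i).sub aemeasurable_const)).aestronglyMeasurable) ?_
          refine (ae_restrict_mem measurableSet_Icc).mono fun x hx => ?_
          rw [Real.norm_eq_abs, abs_mul, abs_of_nonneg (hgnn x)]
          exact mul_le_mul (hgM x (lt_of_lt_of_le one_pos hx.1)) (hΔ x hx) (abs_nonneg _) hM0
        have intC : IntegrableOn (fun x => g x * f ((2:ℝ)^i)) (Set.Icc (1:ℝ) 2) :=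
          hgInt.mul_const _
        have iiΔ : IntervalIntegrable (fun x => g x * (f ((2:ℝ)^i * x) - f ((2:ℝ)^i)))
            volume 1 2 := by
          rw [← hIcc_uIcc] at intΔ; exact intΔ.intervalIntegrable
        have iiC : IntervalIntegrable (fun x => g x * f ((2:ℝ)^i)) volume 1 2 := by
          rw [← hIcc_uIcc] at intC; exact intC.intervalIntegrable
        have hstep : (∫ x in u k..u (k+1), g x * f x)
            = 2^i * ∫ x in (1:ℝ)..2, g x * f ((2:ℝ)^i * x) := by
          have hcmv := intervalIntegral.smul_integral_comp_mul_left
            (fun x => g x * f x) (a := 1) (b := 2) ((2:ℝ)^i)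
          rw [mul_one] at hcmv
          rw [huk, huk1, ← hcmv, smul_eq_mul]
          congr 1
          refine intervalIntegral.integral_congr fun x hx => ?_
          rw [hIcc_uIcc] at hx
          rw [hgscale x (lt_of_lt_of_le one_pos hx.1) i]
        have hsplitk : (∫ x in (1:ℝ)..2, g x * f ((2:ℝ)^i * x))
            = (∫ x in (1:ℝ)..2, g x * (f ((2:ℝ)^i * x) - f ((2:ℝ)^i))) + f ((2:ℝ)^i) * I12 := by
          have h1 : Set.EqOn (fun x => g x * f ((2:ℝ)^i * x))
              (fun x => g x * (f ((2:ℝ)^i * x) - f ((2:ℝ)^i)) + g x * f ((2:ℝ)^i))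
              (Set.uIcc (1:ℝ) 2) := fun x _ => by ring
          rw [intervalIntegral.integral_congr h1, intervalIntegral.integral_add iiΔ iiC,
            intervalIntegral.integral_mul_const]
          rw [hI12def]
          ring
        have herr : |∫ x in (1:ℝ)..2, g x * (f ((2:ℝ)^i * x) - f ((2:ℝ)^i))| ≤ 2*M*α := by
          have hb := intervalIntegral.norm_integral_le_of_norm_le_const (C := M * (2*α))
            (f := fun x => g x * (f ((2:ℝ)^i * x) - f ((2:ℝ)^i))) (a := 1) (b := 2) ?_
          · rw [Real.norm_eq_abs] at hb
            calc |∫ x in (1:ℝ)..2, g x * (f ((2:ℝ)^i * x) - f ((2:ℝ)^i))|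
                ≤ M * (2*α) * |2 - (1:ℝ)| := hb
              _ = 2*M*α := by norm_num; ring
          · intro x hx
            rw [Set.uIoc_of_le one_le_two] at hx
            have hx' : x ∈ Set.Icc (1:ℝ) 2 := ⟨hx.1.le, hx.2⟩
            rw [Real.norm_eq_abs, abs_mul, abs_of_nonneg (hgnn x)]
            exact mul_le_mul (hgM x (lt_of_lt_of_le one_pos hx'.1)) (hΔ x hx')
              (abs_nonneg _) hM0
        rw [hstep, hsplitk, huk]
        calc |2^i * ((∫ x in (1:ℝ)..2, g x * (f ((2:ℝ)^i * x) - f ((2:ℝ)^i)))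
              + f ((2:ℝ)^i) * I12) - 2^i * (f ((2:ℝ)^i) * I12)|
            = 2^i * |∫ x in (1:ℝ)..2, g x * (f ((2:ℝ)^i * x) - f ((2:ℝ)^i))| := by
              rw [← mul_sub, add_sub_cancel_right, abs_mul, abs_of_nonneg hc0.le]
          _ ≤ 2^i * (2*M*α) := mul_le_mul_of_nonneg_left herr hc0.le
      have hii : ∀ k < n, IntervalIntegrable (fun x => g x * f x) volume (u k) (u (k+1)) :=
        fun k _ => hh.intervalIntegrable
      have hsum := intervalIntegral.sum_integral_adjacent_intervals hii
      have hu0 : u 0 = (2:ℝ)^a := by simp [hudef]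
      have hun : u n = (2:ℝ)^b := by
        simp only [hudef]
        rw [show a + ((n:ℕ):ℤ) = b by omega]
      have hind : (fun x => g x * f x)
          = (Set.Icc ((2:ℝ)^a) ((2:ℝ)^b)).indicator (fun x => g x * f x) := by
        funext x
        by_cases hx : x ∈ Set.Icc ((2:ℝ)^a) ((2:ℝ)^b)
        · rw [Set.indicator_of_mem hx]
        · rw [Set.indicator_of_notMem hx, hsupp x hx, mul_zero]
      have hT1eq : (∫ x, g x * f x) = ∑ k ∈ Finset.range n, ∫ x in u k..u (k+1), g x * f x := by
        rw [hsum, hu0, hun]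
        conv_lhs => rw [hind]
        rw [integral_indicator measurableSet_Icc, integral_Icc_eq_integral_Ioc,
          ← intervalIntegral.integral_of_le h2ab.le]
      have hISeq : (∫ x in Set.Icc (1:ℝ) 2, g x) *
            ∑ i ∈ Finset.Icc a (b-1), (2:ℝ)^i * f (2^i)
          = ∑ k ∈ Finset.range n, u k * (f (u k) * I12) := by
        rw [hI12, sum_Icc_eq_range (fun i => (2:ℝ)^i * f (2^i)) a b hab.le, Finset.mul_sum]
        rw [show (b-a).toNat = n from rfl]
        refine Finset.sum_congr rfl fun k _ => ?_
        simp only [hudef]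
        ring
      rw [hT1eq, hISeq, ← Finset.sum_sub_distrib]
      have hsp : ∑ k ∈ Finset.range n, u k = (2:ℝ)^b - 2^a := by
        simp only [hudef]
        rw [show n = (b-a).toNat from rfl]
        exact sum_pow_two a b hab.le
      calc |∑ k ∈ Finset.range n,
            ((∫ x in u k..u (k+1), g x * f x) - u k * (f (u k) * I12))|
          ≤ ∑ k ∈ Finset.range n,
            |(∫ x in u k..u (k+1), g x * f x) - u k * (f (u k) * I12)| :=
            Finset.abs_sum_le_sum_abs _ _
        _ ≤ ∑ k ∈ Finset.range n, u k * (2*M*α) := by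
            refine Finset.sum_le_sum fun k hk => ?_
            rw [Finset.mem_range] at hk
            refine hkey k ?_
            have := (Int.ofNat_lt.mpr hk : (k:ℤ) < (n:ℤ))
            omega
        _ = ((2:ℝ)^b - 2^a) * (2*M*α) := by rw [← Finset.sum_mul, hsp]
        _ = 2 * ((2:ℝ)^b - 2^a) * M * α := by ring
    · -- junk case : both integrals are zero
      have hgni : ¬ IntegrableOn g (Set.Icc (1:ℝ) 2) := fun hgi =>
        hh (hcover_meas hgi.aemeasurable)
      rw [integral_undef hh, integral_undef hgni, zero_mul, sub_zero, abs_zero]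
      have h0 : (0:ℝ) ≤ 2^b - 2^a := sub_nonneg.mpr h2ab.le
      positivity
end

section
/- For the exponential CDF F(z) = 1 − e^{−λz} and fixed δ ∈ (0,1), the integral I(G) = ∫₀^∞ z² (1 − e^{−λz/δ})^{G−1} λe^{−λz} dz satisfies I(G) ≤ C (log G)² G^{−δ} for some constant C = C(λ, δ) and all G ≥ 2. -/
open MeasureTheory Real Set

lemma myF_deriv (l : ℝ) (hl : 0 < l) (z : ℝ) :
    HasDerivAt (fun z : ℝ => -(z^2 + 2*z/l + 2/l^2) * Real.exp (-l*z))
      (z^2 * (l * Real.exp (-l*z))) z := by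
  have hu : HasDerivAt (fun z : ℝ => -(z^2 + 2*z/l + 2/l^2)) (-(2*z + 2/l)) z := by
    have h1 : HasDerivAt (fun z : ℝ => z^2 + 2*z/l + 2/l^2) (2*z + 2/l) z := by
      have := (((hasDerivAt_pow 2 z).add (((hasDerivAt_id z).const_mul 2).div_const l)).add_const
        (2/l^2))
      refine this.congr_deriv ?_
      simp
    exact h1.neg
  have hv : HasDerivAt (fun z : ℝ => Real.exp (-l*z)) (-l * Real.exp (-l*z)) z := by
    have := ((hasDerivAt_id z).const_mul (-l)).exp
    simpa [mul_comm] using this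
  have := hu.mul hv
  refine this.congr_deriv ?_
  field_simp
  ring

lemma myF_tendsto (l : ℝ) (hl : 0 < l) :
    Filter.Tendsto (fun z : ℝ => -(z^2 + 2*z/l + 2/l^2) * Real.exp (-l*z))
      Filter.atTop (nhds 0) := by
  have key : ∀ n : ℕ, Filter.Tendsto (fun z : ℝ => z^n * Real.exp (-l*z))
      Filter.atTop (nhds 0) := by
    intro n
    have h := tendsto_rpow_mul_exp_neg_mul_atTop_nhds_zero n l hl
    refine h.congr' ?_
    filter_upwards [Filter.eventually_gt_atTop 0] with x hx
    rw [Real.rpow_natCast]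
  have h2 := key 2
  have h1 := (key 1).const_mul (2/l)
  have h0 := (key 0).const_mul (2/l^2)
  have h := ((h2.add h1).add h0).neg
  have heq : -((0:ℝ) + 2/l*0 + 2/l^2*0) = 0 := by ring
  rw [heq] at h
  refine h.congr ?_
  intro x
  ring

lemma pow_one_sub_le (x : ℝ) (hx0 : 0 < x) (hx1 : x ≤ 1) (n : ℕ) (hn : 1 ≤ n) :
    (1 - x)^n ≤ 1/((n:ℝ)*x) := by
  have hnx : 0 < (n:ℝ)*x := by positivity
  have a1 : 1 - x ≤ Real.exp (-x) := by
    have := Real.add_one_le_exp (-x); linarith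
  have a2 : (1-x)^n ≤ Real.exp (-((n:ℝ)*x)) := by
    calc (1-x)^n ≤ (Real.exp (-x))^n := pow_le_pow_left₀ (by linarith) a1 n
      _ = Real.exp (-((n:ℝ)*x)) := by rw [← Real.exp_nat_mul]; ring_nf
  have a3 : Real.exp (-((n:ℝ)*x)) ≤ 1/((n:ℝ)*x) := by
    rw [le_div_iff₀ hnx]
    have h1 : (n:ℝ)*x ≤ Real.exp ((n:ℝ)*x) := by
      have := Real.add_one_le_exp ((n:ℝ)*x); linarith
    calc Real.exp (-((n:ℝ)*x)) * ((n:ℝ)*x) ≤ Real.exp (-((n:ℝ)*x)) * Real.exp ((n:ℝ)*x) := by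
          exact mul_le_mul_of_nonneg_left h1 (Real.exp_pos _).le
      _ = 1 := by rw [← Real.exp_add]; simp
  linarith

set_option maxHeartbeats 1000000 in
/-- Upper-bound half of the Laplace rate lemma: for the exponential model, the preserved
mass integral satisfies `I(G) ≤ C (log G)² G^{-δ}` for all `G ≥ 2`. -/
theorem stmt_17 (l δ : ℝ) (hl : 0 < l) (hδ : δ ∈ Set.Ioo (0 : ℝ) 1) :
    ∃ C : ℝ, 0 < C ∧ ∀ G : ℕ, 2 ≤ G →
      (∫ z in Set.Ioi (0 : ℝ),
          z ^ 2 * (1 - Real.exp (-l * z / δ)) ^ (G - 1) * (l * Real.exp (-l * z))) ≤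
        C * (Real.log G) ^ 2 * (G : ℝ) ^ (-δ) := by
  obtain ⟨hδ0, hδ1⟩ := hδ
  have hlog2 : 0 < Real.log 2 := Real.log_pos (by norm_num)
  set c : ℝ := l/δ - l with hc
  have hc0 : 0 < c := by
    rw [hc, sub_pos, lt_div_iff₀ hδ0]
    nlinarith
  set C₁ : ℝ := 2*δ^2/(c*l) with hC₁
  set C₂ : ℝ := δ^2/l^2 + 2*δ/(l^2*Real.log 2) + 2/(l^2*(Real.log 2)^2) with hC₂
  refine ⟨C₁ + C₂, by positivity, ?_⟩
  intro G hG
  set L : ℝ := Real.log G with hLdef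
  have hG0 : (0:ℝ) < G := by positivity
  have hG2 : (2:ℝ) ≤ (G:ℝ) := by exact_mod_cast hG
  have hL2 : Real.log 2 ≤ L := Real.log_le_log (by norm_num) hG2
  have hL0 : 0 < L := lt_of_lt_of_le hlog2 hL2
  have hexpL : Real.exp L = G := Real.exp_log hG0
  set R : ℝ := Real.exp (-(δ*L)) with hR
  have hR0 : 0 < R := Real.exp_pos _
  have hGδ : (G:ℝ) ^ (-δ) = R := by
    rw [Real.rpow_def_of_pos hG0, hR]
    congr 1; ring
  set T : ℝ := δ/l * L with hT
  have hT0 : 0 < T := by positivity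
  have hlT : l * T = δ * L := by rw [hT]; field_simp
  have hcT : c * T = L - δ * L := by rw [hc, hT]; field_simp
  have hecT : Real.exp (c*T) = (G:ℝ) * R := by
    have harg : L - δ*L = L + -(δ*L) := by ring
    rw [hcT, harg, hR, ← hexpL, ← Real.exp_add]
  -- functions
  set f : ℝ → ℝ := fun z => z ^ 2 * (1 - Real.exp (-l * z / δ)) ^ (G - 1) * (l * Real.exp (-l * z))
    with hf
  set g : ℝ → ℝ := fun z => z^2 * (l * Real.exp (-l*z)) with hg
  -- basic pointwise facts
  have hbase : ∀ z : ℝ, 0 < z → 0 < Real.exp (-l*z/δ) ∧ Real.exp (-l*z/δ) ≤ 1 := by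
    intro z hz
    refine ⟨Real.exp_pos _, Real.exp_le_one_iff.mpr ?_⟩
    have h : -l * z / δ = -(l * z / δ) := by ring
    rw [h, neg_nonpos]
    positivity
  have hf_nonneg : ∀ z ∈ Ioi (0:ℝ), 0 ≤ f z := by
    intro z hz
    obtain ⟨hx0, hx1⟩ := hbase z hz
    have : (0:ℝ) ≤ 1 - Real.exp (-l*z/δ) := by linarith
    positivity
  have hfg : ∀ z ∈ Ioi (0:ℝ), f z ≤ g z := by
    intro z hz
    obtain ⟨hx0, hx1⟩ := hbase z hz
    have hpow : (1 - Real.exp (-l*z/δ)) ^ (G-1) ≤ 1 :=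
      pow_le_one₀ (by linarith) (by linarith)
    have : z^2 * (1 - Real.exp (-l*z/δ)) ^ (G-1) ≤ z^2 * 1 :=
      mul_le_mul_of_nonneg_left hpow (sq_nonneg z)
    calc f z ≤ (z^2 * 1) * (l * Real.exp (-l*z)) := by
          exact mul_le_mul_of_nonneg_right this (by positivity)
      _ = g z := by rw [hg]; ring
  -- integrability
  have hFc : Continuous (fun z : ℝ => -(z^2 + 2*z/l + 2/l^2) * Real.exp (-l*z)) := by
    fun_prop
  have hgint0 : IntegrableOn g (Ioi (0:ℝ)) := by
    refine integrableOn_Ioi_deriv_of_nonneg (hFc.continuousWithinAt)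
      (fun x _ => myF_deriv l hl x) (fun x hx => by positivity) (myF_tendsto l hl)
  have hgintT : IntegrableOn g (Ioi T) := hgint0.mono_set (Set.Ioi_subset_Ioi hT0.le)
  have hfm : Continuous f := by fun_prop
  have hfint : IntegrableOn f (Ioi (0:ℝ)) := by
    refine Integrable.mono' hgint0 (hfm.aestronglyMeasurable.restrict) ?_
    rw [ae_restrict_iff' measurableSet_Ioi]
    filter_upwards with z hz
    rw [Real.norm_eq_abs, abs_of_nonneg (hf_nonneg z hz)]
    exact hfg z hz
  have hfintIoc : IntegrableOn f (Ioc 0 T) := hfint.mono_set Set.Ioc_subset_Ioi_self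
  have hfintT : IntegrableOn f (Ioi T) := hfint.mono_set (Set.Ioi_subset_Ioi hT0.le)
  -- split
  have hsplit : ∫ z in Ioi (0:ℝ), f z = (∫ z in Ioc 0 T, f z) + ∫ z in Ioi T, f z := by
    rw [← setIntegral_union (Set.Ioc_disjoint_Ioi le_rfl) measurableSet_Ioi hfintIoc hfintT,
      Set.Ioc_union_Ioi_eq_Ioi hT0.le]
  -- head bound
  set K : ℝ := T^2*l/((G:ℝ)-1) with hK
  have hG1 : (1:ℝ) ≤ (G:ℝ) - 1 := by linarith
  have hK0 : 0 < K := by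
    rw [hK]; positivity
  have hhead_pt : ∀ z ∈ Ioc (0:ℝ) T, f z ≤ K * Real.exp (c*z) := by
    intro z hz
    obtain ⟨hx0, hx1⟩ := hbase z hz.1
    have hcast : ((G-1 : ℕ) : ℝ) = (G:ℝ) - 1 := by
      have : 1 ≤ G := by omega
      push_cast [this]; ring
    have hpow : (1 - Real.exp (-l*z/δ)) ^ (G-1) ≤
        Real.exp (l*z/δ) / ((G:ℝ)-1) := by
      have := pow_one_sub_le (Real.exp (-l*z/δ)) hx0 hx1 (G-1) (by omega)
      rw [hcast] at this
      calc (1 - Real.exp (-l*z/δ)) ^ (G-1) ≤ 1/(((G:ℝ)-1) * Real.exp (-l*z/δ)) := this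
        _ = Real.exp (l*z/δ) / ((G:ℝ)-1) := by
            have hE : Real.exp (l*z/δ) * Real.exp (-l*z/δ) = 1 := by
              rw [← Real.exp_add]
              have h0 : l*z/δ + -l*z/δ = 0 := by ring
              rw [h0, Real.exp_zero]
            rw [div_eq_div_iff (by positivity) (by linarith)]
            linear_combination (1-(G:ℝ)) * hE
    have hz2 : z^2 ≤ T^2 := by nlinarith [hz.1, hz.2]
    have hstep : f z ≤ T^2 * (Real.exp (l*z/δ) / ((G:ℝ)-1)) * (l * Real.exp (-l*z)) := by
      rw [hf]
      have h1 : z ^ 2 * (1 - Real.exp (-l * z / δ)) ^ (G - 1) ≤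
          T^2 * (Real.exp (l*z/δ) / ((G:ℝ)-1)) := by
        have hp0 : (0:ℝ) ≤ (1 - Real.exp (-l*z/δ)) ^ (G-1) := by
          apply pow_nonneg; linarith
        exact mul_le_mul hz2 hpow hp0 (by positivity)
      exact mul_le_mul_of_nonneg_right h1 (by positivity)
    calc f z ≤ T^2 * (Real.exp (l*z/δ) / ((G:ℝ)-1)) * (l * Real.exp (-l*z)) := hstep
      _ = K * Real.exp (c*z) := by
          have hE2 : Real.exp (l*z/δ) * Real.exp (-l*z) = Real.exp ((l/δ - l)*z) := by
            rw [← Real.exp_add]; congr 1; field_simp; ring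
          rw [hK, hc, ← hE2]
          ring
  have hKint : IntegrableOn (fun z : ℝ => K * Real.exp (c*z)) (Ioc 0 T) := by
    apply Continuous.integrableOn_Ioc; fun_prop
  have hhead : (∫ z in Ioc 0 T, f z) ≤ K * ((Real.exp (c*T) - 1)/c) := by
    calc (∫ z in Ioc 0 T, f z) ≤ ∫ z in Ioc 0 T, K * Real.exp (c*z) :=
        setIntegral_mono_on hfintIoc hKint measurableSet_Ioc hhead_pt
      _ = K * ((Real.exp (c*T) - 1)/c) := by
          rw [← intervalIntegral.integral_of_le hT0.le, intervalIntegral.integral_const_mul]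
          congr 1
          have := intervalIntegral.integral_comp_mul_left (a := (0:ℝ)) (b := T)
            (fun x => Real.exp x) hc0.ne'
          simp only [mul_zero, smul_eq_mul] at this
          rw [this, integral_exp]
          simp [div_eq_inv_mul]
  -- tail bound
  have htail_eq : (∫ z in Ioi T, g z) = (T^2 + 2*T/l + 2/l^2) * Real.exp (-l*T) := by
    have := integral_Ioi_of_hasDerivAt_of_tendsto' (a := T)
      (fun x _ => myF_deriv l hl x) hgintT (myF_tendsto l hl)
    rw [hg]
    rw [this]
    ring
  have htail : (∫ z in Ioi T, f z) ≤ (T^2 + 2*T/l + 2/l^2) * R := by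
    have h1 : (∫ z in Ioi T, f z) ≤ ∫ z in Ioi T, g z := by
      apply setIntegral_mono_on hfintT hgintT measurableSet_Ioi
      intro z hz
      exact hfg z (lt_trans hT0 hz)
    have h2 : Real.exp (-l*T) = R := by
      rw [hR]; congr 1; rw [← hlT]; ring
    rw [htail_eq, h2] at h1
    exact h1
  -- final arithmetic: head
  have hheadC : K * ((Real.exp (c*T) - 1)/c) ≤ C₁ * L^2 * R := by
    have hs0 : (Real.exp (c*T) - 1)/c ≤ Real.exp (c*T)/c :=
      (div_le_div_iff_of_pos_right hc0).mpr (by linarith [Real.exp_pos (c*T)])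
    have hs1 : K * ((Real.exp (c*T) - 1)/c) ≤ K * (Real.exp (c*T)/c) :=
      mul_le_mul_of_nonneg_left hs0 hK0.le
    have heq : K * (Real.exp (c*T)/c) = (δ^2*L^2*R/(c*l)) * ((G:ℝ)/((G:ℝ)-1)) := by
      rw [hecT, hK, hT]
      field_simp
    have hGfrac : (G:ℝ)/((G:ℝ)-1) ≤ 2 := by
      rw [div_le_iff₀ (by linarith)]
      linarith
    have hs2 : (δ^2*L^2*R/(c*l)) * ((G:ℝ)/((G:ℝ)-1)) ≤ (δ^2*L^2*R/(c*l)) * 2 :=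
      mul_le_mul_of_nonneg_left hGfrac (by positivity)
    have hs3 : (δ^2*L^2*R/(c*l)) * 2 = C₁ * L^2 * R := by
      rw [hC₁]; ring
    linarith [hs1, heq ▸ hs1, hs2]
  -- final arithmetic: tail
  have htailC : (T^2 + 2*T/l + 2/l^2) * R ≤ C₂ * L^2 * R := by
    apply mul_le_mul_of_nonneg_right _ hR0.le
    have key : L ≤ L^2 / Real.log 2 := by
      rw [le_div_iff₀ hlog2]
      nlinarith
    have key2 : (Real.log 2)^2 ≤ L^2 := pow_le_pow_left₀ hlog2.le hL2 2
    have t1 : T^2 = δ^2/l^2 * L^2 := by rw [hT]; ring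
    have t2 : 2*T/l ≤ 2*δ/(l^2*Real.log 2) * L^2 := by
      have e : 2*T/l = (2*δ/l^2) * L := by rw [hT]; ring
      rw [e]
      calc (2*δ/l^2) * L ≤ (2*δ/l^2) * (L^2/Real.log 2) :=
            mul_le_mul_of_nonneg_left key (by positivity)
        _ = 2*δ/(l^2*Real.log 2) * L^2 := by ring
    have t3 : 2/l^2 ≤ 2/(l^2*(Real.log 2)^2) * L^2 := by
      have h1 : (1:ℝ) ≤ L^2/(Real.log 2)^2 := (one_le_div (by positivity)).mpr key2
      calc 2/l^2 = 2/l^2 * 1 := by ring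
        _ ≤ 2/l^2 * (L^2/(Real.log 2)^2) := mul_le_mul_of_nonneg_left h1 (by positivity)
        _ = 2/(l^2*(Real.log 2)^2) * L^2 := by ring
    calc T^2 + 2*T/l + 2/l^2
        ≤ δ^2/l^2*L^2 + 2*δ/(l^2*Real.log 2)*L^2 + 2/(l^2*(Real.log 2)^2)*L^2 := by
          rw [t1]; linarith
      _ = C₂ * L^2 := by rw [hC₂]; ring
  -- conclusion
  rw [hGδ]
  calc (∫ z in Ioi (0:ℝ), f z) = (∫ z in Ioc 0 T, f z) + ∫ z in Ioi T, f z := hsplit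
    _ ≤ C₁ * L^2 * R + C₂ * L^2 * R :=
        add_le_add (le_trans hhead hheadC) (le_trans htail htailC)
    _ = (C₁ + C₂) * L^2 * R := by ring
end
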